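/- arXiv:1405.3224 — 9 statements merged into one kernel-verified Lean document; each statement's English description precedes it below -/
import Mathlib

section
/- Let σ > 0 and let X₁, X₂, … be independent real-valued random variables on a probability space such that for every i and every λ ∈ ℝ, log E[exp(λ Xᵢ)] ≤ λ²σ²/2. For every positive integer t let S_t = X₁ + ⋯ + X_t. Then for every β > 1 and every x ≥ 8/(e−1)², P( ∃ t ∈ ℕ, t ≥ 1, S_t > √(2σ² t (x + β·log(log(e·t)))) ) ≤ √e · ζ(β(1 − 1/(2x))) · (√x/(2√2) + 1)^β · exp(−x), where ζ(u) = Σ_{k≥1} k^{−u}. -/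
open MeasureTheory ProbabilityTheory

theorem ville_aux {Ω : Type*} [MeasurableSpace Ω] (P : Measure Ω) [IsProbabilityMeasure P]
    (σ : ℝ) (X : ℕ → Ω → ℝ) (hmeas : ∀ i, Measurable (X i))
    (hindep : iIndepFun X P)
    (hsubg : ∀ (i : ℕ) (l : ℝ), Integrable (fun ω => Real.exp (l * X i ω)) P ∧
      Real.log (∫ ω, Real.exp (l * X i ω) ∂P) ≤ l ^ 2 * σ ^ 2 / 2)
    (l c : ℝ) :
    P {ω | ∃ t : ℕ, c ≤ l * (∑ i ∈ Finset.range t, X i ω) - t * (l ^ 2 * σ ^ 2 / 2)}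
      ≤ ENNReal.ofReal (Real.exp (-c)) := by
  classical
  set d : ℝ := l ^ 2 * σ ^ 2 / 2 with hd
  have hd0 : 0 ≤ d := by positivity
  set f : ℕ → Ω → ℝ := fun n ω => Real.exp (l * (∑ i ∈ Finset.range n, X i ω) - n * d)
    with hfdef
  set 𝒢 : Filtration ℕ ‹MeasurableSpace Ω› :=
    { seq := fun n => ⨆ j ∈ {j : ℕ | j < n}, MeasurableSpace.comap (X j) inferInstance
      mono' := fun n m hnm => biSup_mono fun j hj => lt_of_lt_of_le hj hnm
      le' := fun n => iSup₂_le fun j _ => (hmeas j).comap_le } with h𝒢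
  have hXG : ∀ {j n : ℕ}, j < n → Measurable[𝒢 n] (X j) := by
    intro j n hj
    exact measurable_iff_comap_le.mpr
      (le_biSup (fun j => MeasurableSpace.comap (X j) inferInstance) hj)
  have hadp : StronglyAdapted 𝒢 f := by
    intro n
    have hS : Measurable[𝒢 n] fun ω => ∑ i ∈ Finset.range n, X i ω := by
      apply Finset.measurable_sum
      intro i hi
      exact hXG (Finset.mem_range.mp hi)
    exact (((hS.const_mul l).sub measurable_const).exp).stronglyMeasurable
  have hint : ∀ n, Integrable (f n) P := by
    intro n
    have h1 : Integrable (fun ω => Real.exp (l * (∑ i ∈ Finset.range n, X i) ω)) P :=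
      hindep.integrable_exp_mul_sum hmeas (fun i _ => (hsubg i l).1)
    have h2 : f n = fun ω =>
        Real.exp (l * (∑ i ∈ Finset.range n, X i) ω) * Real.exp (-(n * d)) := by
      funext ω
      rw [← Real.exp_add]
      simp only [hfdef, Finset.sum_apply]
      congr 1
    rw [h2]
    exact h1.mul_const _
  have hsuper : Supermartingale f 𝒢 P := by
    refine supermartingale_nat hadp hint fun n => ?_
    set g : Ω → ℝ := fun ω => Real.exp (l * X n ω - d) with hgdef
    have hfg : f (n + 1) = f n * g := by
      funext ω
      simp only [hfdef, hgdef, Pi.mul_apply, ← Real.exp_add, Finset.sum_range_succ]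
      congr 1
      push_cast
      ring
    have hgint : Integrable g P := by
      have h2 : g = fun ω => Real.exp (l * X n ω) * Real.exp (-d) := by
        funext ω; rw [← Real.exp_add]; congr 1
      rw [h2]
      exact ((hsubg n l).1).mul_const _
    have hindepg : Indep (MeasurableSpace.comap (X n) inferInstance) (𝒢 n) P := by
      have h := indep_iSup_of_disjoint (m := fun i => MeasurableSpace.comap (X i) inferInstance)
        (fun k => (hmeas k).comap_le) hindep (S := {n}) (T := {j : ℕ | j < n})
        (by simp [Set.disjoint_left])
      simp at h; exact h
    have hgmeas : StronglyMeasurable[MeasurableSpace.comap (X n) inferInstance] g := by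
      have h1 : Measurable[MeasurableSpace.comap (X n) inferInstance] (X n) :=
        measurable_iff_comap_le.mpr le_rfl
      exact (((h1.const_mul l).sub measurable_const).exp).stronglyMeasurable
    have hcond1 : P[g|𝒢 n] =ᵐ[P] fun _ => ∫ ω, g ω ∂P :=
      condExp_indep_eq (hmeas n).comap_le (𝒢.le n) hgmeas hindepg
    have hcond2 : P[f (n + 1)|𝒢 n] =ᵐ[P] f n * P[g|𝒢 n] := by
      rw [hfg]
      exact condExp_mul_of_stronglyMeasurable_left (hadp n) (hfg ▸ hint (n + 1)) hgint
    have hEg : ∫ ω, g ω ∂P ≤ 1 := by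
      have h2 : ∫ ω, g ω ∂P = (∫ ω, Real.exp (l * X n ω) ∂P) * Real.exp (-d) := by
        rw [← integral_mul_const]
        congr 1
        funext ω
        rw [← Real.exp_add]; congr 1
      have hpos : 0 < ∫ ω, Real.exp (l * X n ω) ∂P := integral_exp_pos (hsubg n l).1
      have h3 : ∫ ω, Real.exp (l * X n ω) ∂P ≤ Real.exp d := by
        rw [← Real.exp_log hpos]
        exact Real.exp_le_exp.mpr (hsubg n l).2
      rw [h2]
      calc (∫ ω, Real.exp (l * X n ω) ∂P) * Real.exp (-d)
          ≤ Real.exp d * Real.exp (-d) := by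
            exact mul_le_mul_of_nonneg_right h3 (Real.exp_nonneg _)
        _ = 1 := by rw [← Real.exp_add]; simp
    have hcond3 : P[f (n + 1)|𝒢 n] =ᵐ[P] fun ω => f n ω * ∫ ω', g ω' ∂P :=
      hcond2.trans (by filter_upwards [hcond1] with ω hω; rw [Pi.mul_apply, hω])
    refine hcond3.le.trans (Filter.Eventually.of_forall fun ω => ?_)
    calc f n ω * ∫ ω', g ω' ∂P ≤ f n ω * 1 :=
          mul_le_mul_of_nonneg_left hEg (Real.exp_nonneg _)
      _ = f n ω := mul_one _
  -- fixed horizon maximal inequality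
  have key : ∀ n : ℕ, P {ω | ∃ t ≤ n, Real.exp c ≤ f t ω} ≤ ENNReal.ofReal (Real.exp (-c)) := by
    intro n
    set A : Set Ω := {ω | ∃ t ≤ n, Real.exp c ≤ f t ω} with hA
    have hAmeas : MeasurableSet A := by
      have : A = ⋃ t ∈ Finset.range (n + 1), {ω | Real.exp c ≤ f t ω} := by
        ext ω
        simp [hA, Nat.lt_succ_iff]
      rw [this]
      apply MeasurableSet.biUnion (Finset.range (n + 1)).countable_toSet
      intro t _
      exact measurableSet_le measurable_const
        (((((Finset.measurable_sum _ fun i _ => hmeas i).const_mul l).sub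
          measurable_const).exp))
    set τ : Ω → WithTop ℕ := fun ω => (hittingBtwn f {y : ℝ | Real.exp c ≤ y} 0 n ω : ℕ) with hτdef
    have hτst : IsStoppingTime 𝒢 τ := hittingBtwn_isStoppingTime hsuper.stronglyAdapted.adapted measurableSet_Ici
    have hτle : ∀ ω, τ ω ≤ n := fun ω => WithTop.coe_le_coe.mpr (hittingBtwn_le ω)
    have hsvint : Integrable (stoppedValue f τ) P := integrable_stoppedValue ℕ hτst hint hτle
    have hsv_nonneg : 0 ≤ᵐ[P] stoppedValue f τ :=
      Filter.Eventually.of_forall fun ω => Real.exp_nonneg _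
    have hge : ∀ ω ∈ A, Real.exp c ≤ stoppedValue f τ ω := by
      intro ω hω
      obtain ⟨t, ht, hft⟩ := hω
      refine stoppedValue_hittingBtwn_mem ?_
      exact ⟨t, by simpa using ht, hft⟩
    have h1 : Real.exp c * (P A).toReal ≤ ∫ ω in A, stoppedValue f τ ω ∂P :=
      by have := setIntegral_ge_of_const_le hAmeas (measure_ne_top _ _) hge hsvint.integrableOn
         rwa [smul_eq_mul, mul_comm, measureReal_def] at this
    have h2 : ∫ ω in A, stoppedValue f τ ω ∂P ≤ ∫ ω, stoppedValue f τ ω ∂P :=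
      setIntegral_le_integral hsvint hsv_nonneg
    have h3 : ∫ ω, stoppedValue f τ ω ∂P ≤ ∫ ω, f 0 ω ∂P := by
      have hmono := hsuper.neg.expected_stoppedValue_mono
        (isStoppingTime_const 𝒢 0) hτst (fun ω => WithTop.coe_le_coe.mpr (Nat.zero_le _)) hτle
      have hz : stoppedValue (-f) (fun _ => WithTop.some (0 : ℕ)) = -(f 0) := rfl
      have hτz : stoppedValue (-f) τ = -(stoppedValue f τ) := rfl
      rw [hz, hτz] at hmono
      simp only [Pi.neg_apply] at hmono
      rw [integral_neg, integral_neg, neg_le_neg_iff] at hmono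
      exact hmono
    have h4 : ∫ ω, f 0 ω ∂P = 1 := by
      have : f 0 = fun _ => (1 : ℝ) := by
        funext ω; simp [hfdef]
      rw [this]
      simp
    have h5 : (P A).toReal ≤ Real.exp (-c) := by
      have hec : 0 < Real.exp c := Real.exp_pos c
      have hch : Real.exp c * (P A).toReal ≤ 1 := h1.trans (h2.trans (h3.trans_eq h4))
      have h6 : (P A).toReal ≤ 1 / Real.exp c := by
        rw [le_div_iff₀ hec]
        linarith [hch]
      simpa [Real.exp_neg, one_div] using h6
    rw [← ENNReal.ofReal_toReal (measure_ne_top P A)]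
    exact ENNReal.ofReal_le_ofReal h5
  -- pass to the limit
  have hset : {ω | ∃ t : ℕ, c ≤ l * (∑ i ∈ Finset.range t, X i ω) - t * (l ^ 2 * σ ^ 2 / 2)}
      = ⋃ n, {ω | ∃ t ≤ n, Real.exp c ≤ f t ω} := by
    ext ω
    simp only [Set.mem_setOf_eq, Set.mem_iUnion]
    constructor
    · rintro ⟨t, ht⟩
      exact ⟨t, t, le_rfl, Real.exp_le_exp.mpr ht⟩
    · rintro ⟨n, t, htn, ht⟩
      exact ⟨t, Real.exp_le_exp.mp ht⟩
  rw [hset, Monotone.measure_iUnion]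
  · exact iSup_le key
  · intro a b hab
    rintro ω ⟨t, htn, ht⟩
    exact ⟨t, htn.trans hab, ht⟩


-- key chord inequality for one epoch
set_option maxHeartbeats 1000000 in
lemma key_ineq (σ x β ρ : ℝ) (hσ : 0 < σ) (hρ1 : 1 < ρ) (hx0 : 0 < x) (hβ0 : 0 < β)
    (k t : ℕ) (ht1 : 1 ≤ t) (S : ℝ)
    (hk1 : (ρ ^ k) ^ 2 ≤ (t : ℝ)) (hk2 : (t : ℝ) ≤ (ρ ^ k * ρ) ^ 2)
    (hS : Real.sqrt (2 * σ ^ 2 * t * (x + β * Real.log (Real.log (Real.exp 1 * t)))) < S) :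
    4 * ρ / (ρ + 1) ^ 2 * (x + β * Real.log (1 + 2 * k * Real.log ρ)) ≤
      2 * Real.sqrt (2 * σ ^ 2 * (x + β * Real.log (1 + 2 * k * Real.log ρ))) /
          (σ ^ 2 * ρ ^ k * (ρ + 1)) * S -
        t * ((2 * Real.sqrt (2 * σ ^ 2 * (x + β * Real.log (1 + 2 * k * Real.log ρ))) /
          (σ ^ 2 * ρ ^ k * (ρ + 1))) ^ 2 * σ ^ 2 / 2) := by
  have hρ0 : (0:ℝ) < ρ := by linarith
  have hlogρ : 0 < Real.log ρ := Real.log_pos hρ1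
  set u : ℝ := x + β * Real.log (1 + 2 * k * Real.log ρ) with hudef
  have hv1 : (1:ℝ) ≤ 1 + 2 * k * Real.log ρ := by
    have : (0:ℝ) ≤ 2 * k * Real.log ρ := by positivity
    linarith
  have hu0 : 0 < u := by
    have : (0:ℝ) ≤ Real.log (1 + 2 * k * Real.log ρ) := Real.log_nonneg hv1
    nlinarith
  set w : ℝ := Real.sqrt (2 * σ ^ 2 * u) with hwdef
  have hw0 : 0 < w := Real.sqrt_pos.mpr (by positivity)
  have hw2 : w ^ 2 = 2 * σ ^ 2 * u := Real.sq_sqrt (by positivity)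
  set m : ℝ := ρ ^ k with hmdef
  have hm0 : 0 < m := by positivity
  set L : ℝ := 2 * w / (σ ^ 2 * m * (ρ + 1)) with hLdef
  have hL0 : 0 < L := by positivity
  have ht0 : (0:ℝ) < t := by exact_mod_cast Nat.lt_of_lt_of_le Nat.zero_lt_one ht1
  set r : ℝ := Real.sqrt t with hrdef
  have hr2 : r ^ 2 = (t:ℝ) := Real.sq_sqrt ht0.le
  have hmr : m ≤ r := by
    have h := Real.sqrt_le_sqrt hk1
    rwa [Real.sqrt_sq hm0.le] at h
  have hrρ : r ≤ ρ * m := by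
    have h := Real.sqrt_le_sqrt hk2
    rw [Real.sqrt_sq (by positivity)] at h
    calc r ≤ ρ ^ k * ρ := h
      _ = ρ * m := by rw [hmdef]; ring
  -- monotonicity in the boundary
  have hloget : 1 + 2 * k * Real.log ρ ≤ Real.log (Real.exp 1 * t) := by
    rw [Real.log_mul (Real.exp_ne_zero 1) (ne_of_gt ht0), Real.log_exp]
    have h2 : 2 * (k:ℝ) * Real.log ρ ≤ Real.log t := by
      calc 2 * (k:ℝ) * Real.log ρ = Real.log ((ρ ^ k) ^ 2) := by
            rw [Real.log_pow, Real.log_pow]; push_cast; ring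
        _ ≤ Real.log t := Real.log_le_log (by positivity) hk1
    linarith
  have hu_le : u ≤ x + β * Real.log (Real.log (Real.exp 1 * t)) := by
    rw [hudef]
    have h3 : Real.log (1 + 2 * k * Real.log ρ) ≤ Real.log (Real.log (Real.exp 1 * t)) :=
      Real.log_le_log (by linarith) hloget
    nlinarith
  have hsqrt1 : w * r ≤ Real.sqrt (2 * σ ^ 2 * t * (x + β * Real.log (Real.log (Real.exp 1 * t)))) := by
    rw [hwdef, hrdef, ← Real.sqrt_mul (by positivity)]
    apply Real.sqrt_le_sqrt
    calc 2 * σ ^ 2 * u * t = 2 * σ ^ 2 * t * u := by ring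
      _ ≤ 2 * σ ^ 2 * t * (x + β * Real.log (Real.log (Real.exp 1 * t))) := by
          apply mul_le_mul_of_nonneg_left hu_le (by positivity)
  -- chord inequality
  have hchord : ρ * m * w / (ρ + 1) + w / (m * (ρ + 1)) * t ≤ w * r := by
    have hden : (0:ℝ) < m * (ρ + 1) := by positivity
    have heq : ρ * m * w / (ρ + 1) + w / (m * (ρ + 1)) * t
        = (ρ * m ^ 2 * w + w * t) / (m * (ρ + 1)) := by
      field_simp
    rw [heq, div_le_iff₀ hden]
    nlinarith [mul_nonneg hw0.le (mul_nonneg (sub_nonneg.mpr hmr) (sub_nonneg.mpr hrρ)), hr2]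
  have hSgt : ρ * m * w / (ρ + 1) + w / (m * (ρ + 1)) * t < S :=
    lt_of_le_of_lt (hchord.trans hsqrt1) hS
  -- algebraic identities
  clear_value u w m L r
  have hσ2 : σ ^ 2 ≠ 0 := by positivity
  have hm' : m ≠ 0 := ne_of_gt hm0
  have hρ1' : ρ + 1 ≠ 0 := by positivity
  have hID1 : L * (ρ * m * w / (ρ + 1)) = 4 * ρ / (ρ + 1) ^ 2 * u := by
    rw [hLdef]
    field_simp
    linear_combination 2*hw2
  have hID2 : L * (w / (m * (ρ + 1))) = L ^ 2 * σ ^ 2 / 2 := by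
    rw [hLdef]
    field_simp
  have h7 : L * (ρ * m * w / (ρ + 1)) + L * (w / (m * (ρ + 1)) * t) < L * S := by
    have h := mul_lt_mul_of_pos_left hSgt hL0
    rw [mul_add] at h
    exact h
  have h8 : L * (w / (m * (ρ + 1)) * t) = (t:ℝ) * (L ^ 2 * σ ^ 2 / 2) := by
    rw [← mul_assoc, hID2]; ring
  rw [← hID1]
  linarith [h7, h8]



lemma term_bound (x β ρ C γ : ℝ) (hx : 1/2 < x) (hβ : 1 < β) (hρ1 : 1 < ρ)
    (hγ : γ = 1 - 1/(2*x)) (hC1 : 1 ≤ C) (hClog : 1/C ≤ 2*Real.log ρ) (k : ℕ) :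
    Real.exp (-(γ * (x + β * Real.log (1 + 2*k*Real.log ρ)))) ≤
      Real.sqrt (Real.exp 1) * ((k:ℝ)+1) ^ (-(β*γ)) * (C ^ β * Real.exp (-x)) := by
  have hx0 : 0 < x := by linarith
  have hβ0 : 0 < β := by linarith
  have hC0 : (0:ℝ) < C := by linarith
  have hγ0 : 0 < γ := by
    rw [hγ]
    have h1 : 1/(2*x) < 1 := by rw [div_lt_one (by linarith)]; linarith
    linarith
  have hγ1 : γ ≤ 1 := by
    rw [hγ]
    have : 0 ≤ 1/(2*x) := by positivity
    linarith
  have hlogρ : 0 < Real.log ρ := Real.log_pos hρ1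
  set v : ℝ := 1 + 2*(k:ℝ)*Real.log ρ with hv
  have hv1 : (1:ℝ) ≤ v := le_add_of_nonneg_right (by positivity)
  have hv0 : (0:ℝ) < v := by linarith
  have hkc : ((k:ℝ)+1)/C ≤ v := by
    rw [div_le_iff₀ hC0]
    have h2 : 1 ≤ 2*Real.log ρ * C := by
      rw [div_le_iff₀ hC0] at hClog; linarith
    have hk0 : (0:ℝ) ≤ k := Nat.cast_nonneg k
    have hexp : v * C = C + (k:ℝ) * (2*Real.log ρ * C) := by rw [hv]; ring
    rw [hexp]
    nlinarith
  have hE0 : 0 ≤ β*γ := by positivity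
  have hstep : v ^ (-(β*γ)) ≤ ((k:ℝ)+1) ^ (-(β*γ)) * C ^ β := by
    have h1 : v ^ (-(β*γ)) ≤ (((k:ℝ)+1)/C) ^ (-(β*γ)) :=
      Real.rpow_le_rpow_of_nonpos (by positivity) hkc (neg_nonpos.mpr hE0)
    have h2 : (((k:ℝ)+1)/C) ^ (-(β*γ)) = ((k:ℝ)+1) ^ (-(β*γ)) * C ^ (β*γ) := by
      rw [Real.div_rpow (by positivity) hC0.le, Real.rpow_neg hC0.le, div_inv_eq_mul]
    have h3 : C ^ (β*γ) ≤ C ^ β :=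
      Real.rpow_le_rpow_of_exponent_le hC1 (by nlinarith)
    calc v ^ (-(β*γ)) ≤ (((k:ℝ)+1)/C) ^ (-(β*γ)) := h1
      _ = ((k:ℝ)+1) ^ (-(β*γ)) * C ^ (β*γ) := h2
      _ ≤ ((k:ℝ)+1) ^ (-(β*γ)) * C ^ β :=
          mul_le_mul_of_nonneg_left h3 (Real.rpow_nonneg (by positivity) _)
  have hγx : γ * x = x - 1/2 := by
    rw [hγ]; field_simp
  have hexp2 : Real.exp (-(γ*(x + β*Real.log v)))
      = Real.exp (1/2) * Real.exp (-x) * v ^ (-(β*γ)) := by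
    rw [Real.rpow_def_of_pos hv0, ← Real.exp_add, ← Real.exp_add]
    congr 1
    linear_combination -hγx
  have hsqrtE : Real.sqrt (Real.exp 1) = Real.exp (1/2) := by
    rw [show Real.exp 1 = Real.exp (1/2) ^ 2 by rw [pow_two, ← Real.exp_add]; norm_num]
    exact Real.sqrt_sq (Real.exp_nonneg _)
  calc Real.exp (-(γ*(x + β*Real.log v))) = Real.exp (1/2) * Real.exp (-x) * v ^ (-(β*γ)) := hexp2
    _ ≤ Real.exp (1/2) * Real.exp (-x) * (((k:ℝ)+1) ^ (-(β*γ)) * C ^ β) :=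
        mul_le_mul_of_nonneg_left hstep (by positivity)
    _ = Real.sqrt (Real.exp 1) * ((k:ℝ)+1) ^ (-(β*γ)) * (C ^ β * Real.exp (-x)) := by
        rw [hsqrtE]; ring

theorem stmt_0 {Ω : Type*} [MeasurableSpace Ω] (P : Measure Ω) [IsProbabilityMeasure P]
    (σ : ℝ) (hσ : 0 < σ) (X : ℕ → Ω → ℝ) (hmeas : ∀ i, Measurable (X i))
    (hindep : iIndepFun X P)
    (hsubg : ∀ (i : ℕ) (l : ℝ), Integrable (fun ω => Real.exp (l * X i ω)) P ∧
      Real.log (∫ ω, Real.exp (l * X i ω) ∂P) ≤ l ^ 2 * σ ^ 2 / 2)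
    (β x : ℝ) (hβ : 1 < β) (hx : 8 / (Real.exp 1 - 1) ^ 2 ≤ x) :
    P {ω | ∃ t : ℕ, 1 ≤ t ∧
        (∑ i ∈ Finset.range t, X i ω) >
          Real.sqrt (2 * σ ^ 2 * t * (x + β * Real.log (Real.log (Real.exp 1 * t))))} ≤
      ENNReal.ofReal (Real.sqrt (Real.exp 1)) *
        (∑' k : ℕ, ENNReal.ofReal (((k : ℝ) + 1) ^ (-(β * (1 - 1 / (2 * x)))))) *
        ENNReal.ofReal ((Real.sqrt x / (2 * Real.sqrt 2) + 1) ^ β * Real.exp (-x)) := by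
  have he1 : 1 < Real.exp 1 := by
    have := Real.exp_one_gt_d9; linarith
  have hepos : (0:ℝ) < (Real.exp 1 - 1) ^ 2 := by nlinarith
  have hx0 : 0 < x := lt_of_lt_of_le (div_pos (by norm_num) hepos) hx
  have hxhalf : 1/2 < x := by
    have h5 : Real.exp 1 < 5 := by have := Real.exp_one_lt_d9; linarith
    have h6 : (1:ℝ)/2 < 8 / (Real.exp 1 - 1)^2 := by
      rw [div_lt_div_iff₀ (by norm_num) hepos]
      nlinarith
    linarith
  have hβ0 : 0 < β := by linarith
  set q : ℝ := Real.sqrt (2 * x) with hqdef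
  have hq2 : q ^ 2 = 2 * x := Real.sq_sqrt (by positivity)
  have hq0 : 0 ≤ q := Real.sqrt_nonneg _
  have hq1 : 1 < q := by nlinarith
  set ρ : ℝ := (q + 1) / (q - 1) with hρdef
  have hρ1 : 1 < ρ := by rw [lt_div_iff₀ (by linarith)]; linarith
  have hρ0 : 0 < ρ := by linarith
  have hlogρ : 0 < Real.log ρ := Real.log_pos hρ1
  set γ : ℝ := 1 - 1 / (2 * x) with hγdef
  have hγρ : γ = 4 * ρ / (ρ + 1) ^ 2 := by
    have hq1' : q - 1 ≠ 0 := by intro h; nlinarith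
    have hqne : q ≠ 0 := by intro h; nlinarith
    rw [hγdef, hρdef, ← hq2]
    have hden : (q + 1) / (q - 1) + 1 = 2 * q / (q - 1) := by field_simp; ring
    rw [hden]
    field_simp
    ring
  set C : ℝ := Real.sqrt x / (2 * Real.sqrt 2) + 1 with hCdef
  have hC1 : 1 ≤ C := le_add_of_nonneg_left (by positivity)
  have hClog : 1 / C ≤ 2 * Real.log ρ := by
    have hlogge : 1 - 1/ρ ≤ Real.log ρ := by
      have h := Real.log_le_sub_one_of_pos (show (0:ℝ) < ρ⁻¹ by positivity)
      rw [Real.log_inv] at h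
      have : 1 - ρ⁻¹ ≤ Real.log ρ := by linarith
      simpa [one_div] using this
    have h1ρ : 1 - 1/ρ = 2/(q+1) := by
      rw [hρdef, one_div_div]
      field_simp
      norm_num
    have h4C : q + 1 ≤ 4 * C := by
      have hs2 : Real.sqrt 2 ^ 2 = 2 := Real.sq_sqrt (by norm_num)
      have hs2pos : 0 < Real.sqrt 2 := Real.sqrt_pos.mpr (by norm_num)
      have hq' : q = Real.sqrt 2 * Real.sqrt x := by
        rw [hqdef, Real.sqrt_mul (by norm_num)]
      have h42 : 4 * (Real.sqrt x / (2 * Real.sqrt 2)) = Real.sqrt 2 * Real.sqrt x := by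
        field_simp
        linear_combination (-2) * hs2
      rw [hCdef]
      linarith [Real.sqrt_nonneg x]
    have hC0 : (0:ℝ) < C := by linarith
    calc 1/C ≤ 4/(q+1) := by
          rw [div_le_div_iff₀ hC0 (by linarith)]; linarith
      _ = 2 * (2/(q+1)) := by ring
      _ ≤ 2 * Real.log ρ := by
          rw [← h1ρ]; linarith
  -- the union events
  have hkb : ∀ k : ℕ,
      P {ω | ∃ t : ℕ, γ * (x + β * Real.log (1 + 2 * k * Real.log ρ)) ≤
        2 * Real.sqrt (2 * σ ^ 2 * (x + β * Real.log (1 + 2 * k * Real.log ρ))) /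
            (σ ^ 2 * ρ ^ k * (ρ + 1)) * (∑ i ∈ Finset.range t, X i ω) -
          t * ((2 * Real.sqrt (2 * σ ^ 2 * (x + β * Real.log (1 + 2 * k * Real.log ρ))) /
            (σ ^ 2 * ρ ^ k * (ρ + 1))) ^ 2 * σ ^ 2 / 2)} ≤
      ENNReal.ofReal (Real.sqrt (Real.exp 1)) * ENNReal.ofReal (((k:ℝ)+1) ^ (-(β * γ))) *
        ENNReal.ofReal (C ^ β * Real.exp (-x)) := by
    intro k
    calc P _ ≤ ENNReal.ofReal
          (Real.exp (-(γ * (x + β * Real.log (1 + 2 * k * Real.log ρ))))) :=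
        ville_aux P σ X hmeas hindep hsubg _ _
      _ ≤ ENNReal.ofReal (Real.sqrt (Real.exp 1) * ((k:ℝ)+1) ^ (-(β*γ)) *
            (C ^ β * Real.exp (-x))) :=
        ENNReal.ofReal_le_ofReal (term_bound x β ρ C γ hxhalf hβ hρ1 hγdef hC1 hClog k)
      _ = ENNReal.ofReal (Real.sqrt (Real.exp 1)) * ENNReal.ofReal (((k:ℝ)+1) ^ (-(β * γ))) *
            ENNReal.ofReal (C ^ β * Real.exp (-x)) := by
        rw [ENNReal.ofReal_mul (by positivity), ENNReal.ofReal_mul (by positivity)]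
  -- inclusion
  have hsub : {ω | ∃ t : ℕ, 1 ≤ t ∧
        (∑ i ∈ Finset.range t, X i ω) >
          Real.sqrt (2 * σ ^ 2 * t * (x + β * Real.log (Real.log (Real.exp 1 * t))))} ⊆
      ⋃ k : ℕ, {ω | ∃ t : ℕ, γ * (x + β * Real.log (1 + 2 * k * Real.log ρ)) ≤
        2 * Real.sqrt (2 * σ ^ 2 * (x + β * Real.log (1 + 2 * k * Real.log ρ))) /
            (σ ^ 2 * ρ ^ k * (ρ + 1)) * (∑ i ∈ Finset.range t, X i ω) -
          t * ((2 * Real.sqrt (2 * σ ^ 2 * (x + β * Real.log (1 + 2 * k * Real.log ρ))) /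
            (σ ^ 2 * ρ ^ k * (ρ + 1))) ^ 2 * σ ^ 2 / 2)} := by
    rintro ω ⟨t, ht1, htS⟩
    have ht1R : (1:ℝ) ≤ t := by exact_mod_cast ht1
    obtain ⟨n, hn⟩ := pow_unbounded_of_one_lt (t:ℝ) hρ1
    have hex : ∃ j : ℕ, (t:ℝ) < (ρ ^ (j+1)) ^ 2 := by
      refine ⟨n, lt_of_lt_of_le hn ?_⟩
      rw [← pow_mul]
      exact pow_le_pow_right₀ (le_of_lt hρ1) (by omega)
    set k := Nat.find hex with hkdef
    have hk2 : (t:ℝ) < (ρ ^ (k+1)) ^ 2 := Nat.find_spec hex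
    have hk1 : (ρ ^ k) ^ 2 ≤ (t:ℝ) := by
      rcases Nat.eq_zero_or_pos k with h0 | hpos
      · rw [h0]; simpa using ht1R
      · have hmin := Nat.find_min hex (show k - 1 < k by omega)
        push_neg at hmin
        have : k - 1 + 1 = k := by omega
        rwa [this] at hmin
    rw [pow_succ] at hk2
    refine Set.mem_iUnion.mpr ⟨k, t, ?_⟩
    rw [hγρ]
    exact key_ineq σ x β ρ hσ hρ1 hx0 hβ0 k t ht1 _ hk1 hk2.le htS
  calc P _ ≤ P (⋃ k : ℕ, _) := measure_mono hsub
    _ ≤ ∑' k : ℕ, P _ := measure_iUnion_le _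
    _ ≤ ∑' k : ℕ, (ENNReal.ofReal (Real.sqrt (Real.exp 1)) *
          ENNReal.ofReal (((k:ℝ)+1) ^ (-(β * γ))) *
          ENNReal.ofReal (C ^ β * Real.exp (-x))) := ENNReal.tsum_le_tsum hkb
    _ = ENNReal.ofReal (Real.sqrt (Real.exp 1)) *
          (∑' k : ℕ, ENNReal.ofReal (((k:ℝ)+1) ^ (-(β * γ)))) *
          ENNReal.ofReal (C ^ β * Real.exp (-x)) := by
        rw [ENNReal.tsum_mul_right, ENNReal.tsum_mul_left]
end

section
/- Let σ > 0 and let X₁, X₂, … be independent real-valued random variables on a probability space such that for every i and every λ ∈ ℝ, log E[exp(λ Xᵢ)] ≤ λ²σ²/2. For every positive integer t let S_t = X₁ + ⋯ + X_t. Then for every λ ∈ ℝ and every u > 0, P( ∃ t ∈ ℕ, t ≥ 1, λ S_t − t λ²σ²/2 > u ) ≤ exp(−u). -/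
set_option linter.unusedSectionVars false
set_option maxHeartbeats 1000000

open MeasureTheory ProbabilityTheory

noncomputable section VilleAux

variable {Ω : Type*} [MeasurableSpace Ω]

def auxS (X : ℕ → Ω → ℝ) (n : ℕ) (ω : Ω) : ℝ := ∑ i ∈ Finset.range n, X i ω

def auxW (X : ℕ → Ω → ℝ) (c l : ℝ) (n : ℕ) (ω : Ω) : ℝ :=
  Real.exp (l * auxS X n ω - n * c)

def auxHit (X : ℕ → Ω → ℝ) (c u l : ℝ) (n : ℕ) (ω : Ω) : Prop :=
  ∃ t : ℕ, 1 ≤ t ∧ t ≤ n ∧ l * auxS X t ω - t * c > u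

open Classical in
def auxM (X : ℕ → Ω → ℝ) (c u l : ℝ) : ℕ → Ω → ℝ
  | 0 => fun _ => 1
  | n + 1 => fun ω =>
      if auxHit X c u l n ω then auxM X c u l n ω else auxW X c l (n + 1) ω

variable {X : ℕ → Ω → ℝ} {c u l : ℝ} {P : Measure Ω} [IsProbabilityMeasure P]

lemma auxHit_mono {m n : ℕ} (h : m ≤ n) {ω : Ω} (hm : auxHit X c u l m ω) :
    auxHit X c u l n ω := by
  obtain ⟨t, h1, h2, h3⟩ := hm
  exact ⟨t, h1, h2.trans h, h3⟩

lemma auxM_spec (n : ℕ) (ω : Ω) :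
    (¬ auxHit X c u l n ω → auxM X c u l n ω = auxW X c l n ω) ∧
    (auxHit X c u l n ω → Real.exp u < auxM X c u l n ω) := by
  induction n with
  | zero =>
    refine ⟨fun _ => ?_, fun h => ?_⟩
    · simp [auxM, auxW, auxS]
    · obtain ⟨t, h1, h2, _⟩ := h; omega
  | succ n ih =>
    constructor
    · intro h
      have hn : ¬ auxHit X c u l n ω := fun hh => h (auxHit_mono (Nat.le_succ n) hh)
      simp only [auxM, if_neg hn]
    · intro h
      by_cases hn : auxHit X c u l n ω
      · simp only [auxM, if_pos hn]
        exact ih.2 hn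
      · simp only [auxM, if_neg hn]
        obtain ⟨t, h1, h2, h3⟩ := h
        have ht : t = n + 1 := by
          by_contra hne
          exact hn ⟨t, h1, by omega, h3⟩
        subst ht
        exact Real.exp_lt_exp.2 h3

lemma auxM_nonneg (n : ℕ) (ω : Ω) : 0 ≤ auxM X c u l n ω := by
  by_cases h : auxHit X c u l n ω
  · exact le_of_lt ((Real.exp_pos u).trans ((auxM_spec n ω).2 h))
  · rw [(auxM_spec n ω).1 h]; exact (Real.exp_pos _).le

lemma measurable_auxS (hmeas : ∀ i, Measurable (X i)) (n : ℕ) :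
    Measurable (auxS X n) :=
  Finset.measurable_sum _ fun i _ => hmeas i

lemma measurable_auxW (hmeas : ∀ i, Measurable (X i)) (n : ℕ) :
    Measurable (auxW X c l n) :=
  (((measurable_auxS hmeas n).const_mul l).sub measurable_const).exp

lemma measurableSet_auxHit (hmeas : ∀ i, Measurable (X i)) (n : ℕ) :
    MeasurableSet {ω | auxHit X c u l n ω} := by
  have : {ω | auxHit X c u l n ω} =
      ⋃ t : ℕ, ⋃ _ : 1 ≤ t ∧ t ≤ n, {ω | u < l * auxS X t ω - t * c} := by
    ext ω; simp [auxHit]; tauto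
  rw [this]
  exact MeasurableSet.iUnion fun t => MeasurableSet.iUnion fun _ =>
    measurableSet_lt measurable_const
      (((measurable_auxS hmeas t).const_mul l).sub measurable_const)

lemma measurable_auxM (hmeas : ∀ i, Measurable (X i)) (n : ℕ) :
    Measurable (auxM X c u l n) := by
  induction n with
  | zero => exact measurable_const
  | succ n ih =>
    exact Measurable.ite (measurableSet_auxHit hmeas n) ih (measurable_auxW hmeas (n + 1))

lemma integrable_auxW (hmeas : ∀ i, Measurable (X i))
    (hindep : iIndepFun X P)
    (hint : ∀ i, Integrable (fun ω => Real.exp (l * X i ω)) P) (n : ℕ) :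
    Integrable (auxW X c l n) P := by
  have h := hindep.integrable_exp_mul_sum hmeas (s := Finset.range n)
    (fun i _ => hint i)
  have h2 : Integrable (fun ω => Real.exp (-(n * c)) *
      Real.exp (l * (∑ i ∈ Finset.range n, X i) ω)) P := h.const_mul _
  refine h2.congr (Filter.Eventually.of_forall fun ω => ?_)
  simp only [Finset.sum_apply, auxW, auxS, ← Real.exp_add]
  ring_nf

lemma integrable_auxM (hmeas : ∀ i, Measurable (X i))
    (hindep : iIndepFun X P)
    (hint : ∀ i, Integrable (fun ω => Real.exp (l * X i ω)) P) (n : ℕ) :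
    Integrable (auxM X c u l n) P := by
  induction n with
  | zero => exact integrable_const 1
  | succ n ih =>
    have hHm := measurableSet_auxHit (c := c) (u := u) (l := l) hmeas n
    have heq : auxM X c u l (n + 1) = fun ω =>
        Set.indicator {ω | auxHit X c u l n ω} (auxM X c u l n) ω +
        Set.indicator {ω | auxHit X c u l n ω}ᶜ (auxW X c l (n + 1)) ω := by
      funext ω
      by_cases h : auxHit X c u l n ω
      · simp [auxM, Set.indicator_apply, h]
      · simp [auxM, Set.indicator_apply, h]
    rw [heq]
    exact (ih.indicator hHm).add
      ((integrable_auxW hmeas hindep hint (n + 1)).indicator hHm.compl)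

lemma integral_auxM_succ_le (hmeas : ∀ i, Measurable (X i))
    (hindep : iIndepFun X P)
    (hint : ∀ i, Integrable (fun ω => Real.exp (l * X i ω)) P)
    (hlog : ∀ i, Real.log (∫ ω, Real.exp (l * X i ω) ∂P) ≤ c) (n : ℕ) :
    ∫ ω, auxM X c u l (n + 1) ω ∂P ≤ ∫ ω, auxM X c u l n ω ∂P := by
  classical
  set H := {ω | auxHit X c u l n ω} with hHdef
  have hHm : MeasurableSet H := measurableSet_auxHit hmeas n
  set F := Hᶜ.indicator (auxW X c l n) with hFdef
  set G := fun ω => Real.exp (l * X n ω - c) with hGdef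
  -- sum identity
  have hsum : ∀ t, t ≤ n → ∀ ω : Ω,
      (∑ i ∈ (Finset.range n).attach, if (i : ℕ) < t then X i ω else 0) = auxS X t ω := by
    intro t ht ω
    rw [Finset.sum_attach (Finset.range n) (fun j => if j < t then X j ω else 0),
      ← Finset.sum_filter]
    unfold auxS
    congr 1
    ext i
    simp only [Finset.mem_filter, Finset.mem_range]
    omega
  -- independence of F and G
  set φ : (↥(Finset.range n) → ℝ) → ℝ := fun v =>
    if ∃ t, 1 ≤ t ∧ t ≤ n ∧
        u < l * (∑ i ∈ (Finset.range n).attach, if (i : ℕ) < t then v i else 0) - t * c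
    then 0
    else Real.exp (l * (∑ i ∈ (Finset.range n).attach, v i) - n * c) with hφdef
  set ψ : (↥({n} : Finset ℕ) → ℝ) → ℝ := fun w =>
    Real.exp (l * w ⟨n, Finset.mem_singleton_self n⟩ - c) with hψdef
  have hφ : Measurable φ := by
    refine Measurable.ite ?_ measurable_const ?_
    · have : {v : ↥(Finset.range n) → ℝ | ∃ t, 1 ≤ t ∧ t ≤ n ∧
          u < l * (∑ i ∈ (Finset.range n).attach, if (i : ℕ) < t then v i else 0) - t * c} =
          ⋃ t : ℕ, ⋃ _ : 1 ≤ t ∧ t ≤ n, {v | u < l *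
            (∑ i ∈ (Finset.range n).attach, if (i : ℕ) < t then v i else 0) - t * c} := by
        ext v; simp; tauto
      rw [this]
      refine MeasurableSet.iUnion fun t => MeasurableSet.iUnion fun _ => ?_
      refine measurableSet_lt measurable_const ?_
      refine Measurable.sub (Measurable.const_mul ?_ l) measurable_const
      refine Finset.measurable_sum _ fun i _ => ?_
      by_cases hit : (i : ℕ) < t
      · simpa [hit] using measurable_pi_apply i
      · simpa [hit] using measurable_const
    · refine Real.measurable_exp.comp ?_
      exact ((Finset.measurable_sum _ fun i _ => measurable_pi_apply i).const_mul l).sub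
        measurable_const
  have hψ : Measurable ψ := by
    rw [hψdef]; fun_prop
  have e1 : F = φ ∘ (fun a (i : ↥(Finset.range n)) => X i a) := by
    funext ω
    simp only [Function.comp_apply, hφdef]
    rw [hFdef]
    by_cases h : auxHit X c u l n ω
    · have hc : ∃ t, 1 ≤ t ∧ t ≤ n ∧
          u < l * (∑ i ∈ (Finset.range n).attach, if (i : ℕ) < t then X i ω else 0) - t * c := by
        obtain ⟨t, h1, h2, h3⟩ := h
        exact ⟨t, h1, h2, by rw [hsum t h2 ω]; exact h3⟩
      rw [Set.indicator_of_notMem (Set.notMem_compl_iff.mpr (show ω ∈ H from h)), if_pos hc]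
    · have hc : ¬ ∃ t, 1 ≤ t ∧ t ≤ n ∧
          u < l * (∑ i ∈ (Finset.range n).attach, if (i : ℕ) < t then X i ω else 0) - t * c := by
        rintro ⟨t, h1, h2, h3⟩
        exact h ⟨t, h1, h2, by rwa [hsum t h2 ω] at h3⟩
      rw [Set.indicator_of_mem (Set.mem_compl (show ω ∉ H from h)), if_neg hc]
      unfold auxW
      rw [Finset.sum_attach (Finset.range n) (fun j => X j ω)]
      rfl
  have e2 : G = ψ ∘ (fun a (i : ↥({n} : Finset ℕ)) => X i a) := rfl
  have hFG : IndepFun F G P := by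
    rw [e1, e2]
    exact (hindep.indepFun_finset (Finset.range n) {n} (by simp) hmeas).comp hφ hψ
  -- integrabilities
  have hGeq : ∀ ω, G ω = Real.exp (-c) * Real.exp (l * X n ω) := by
    intro ω; rw [hGdef, ← Real.exp_add]; ring_nf
  have hintG : Integrable G P :=
    ((hint n).const_mul (Real.exp (-c))).congr
      (Filter.Eventually.of_forall fun ω => (hGeq ω).symm)
  have hintF : Integrable F P := (integrable_auxW hmeas hindep hint n).indicator hHm.compl
  have hintM := integrable_auxM (c := c) (u := u) hmeas hindep hint
  have hi1 : Integrable (H.indicator (auxM X c u l n)) P := (hintM n).indicator hHm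
  have hi2 : Integrable (fun ω => F ω * G ω) P := hFG.integrable_mul hintF hintG
  -- decomposition
  have hdec : ∀ ω, auxM X c u l (n + 1) ω = H.indicator (auxM X c u l n) ω + F ω * G ω := by
    intro ω
    by_cases h : auxHit X c u l n ω
    · simp only [auxM, if_pos h]
      rw [Set.indicator_of_mem (show ω ∈ H from h), hFdef,
        Set.indicator_of_notMem (Set.notMem_compl_iff.mpr (show ω ∈ H from h))]
      ring
    · simp only [auxM, if_neg h]
      rw [Set.indicator_of_notMem (show ω ∉ H from h), hFdef,
        Set.indicator_of_mem (Set.mem_compl (show ω ∉ H from h))]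
      rw [zero_add]
      show auxW X c l (n + 1) ω = auxW X c l n ω * Real.exp (l * X n ω - c)
      unfold auxW
      rw [← Real.exp_add]
      congr 1
      have : auxS X (n + 1) ω = auxS X n ω + X n ω := Finset.sum_range_succ _ _
      rw [this]
      push_cast
      ring
  -- integral of G is at most 1
  have hGint : ∫ ω, G ω ∂P ≤ 1 := by
    rw [integral_congr_ae (Filter.Eventually.of_forall hGeq), integral_const_mul]
    have hIle : (∫ ω, Real.exp (l * X n ω) ∂P) ≤ Real.exp c := by
      rcases le_or_gt (∫ ω, Real.exp (l * X n ω) ∂P) 0 with h | h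
      · exact h.trans (Real.exp_pos c).le
      · calc (∫ ω, Real.exp (l * X n ω) ∂P)
            = Real.exp (Real.log (∫ ω, Real.exp (l * X n ω) ∂P)) := (Real.exp_log h).symm
          _ ≤ Real.exp c := Real.exp_le_exp.2 (hlog n)
    calc Real.exp (-c) * ∫ ω, Real.exp (l * X n ω) ∂P
        ≤ Real.exp (-c) * Real.exp c :=
          mul_le_mul_of_nonneg_left hIle (Real.exp_pos _).le
      _ = 1 := by rw [← Real.exp_add]; simp
  have hFnn : 0 ≤ ∫ ω, F ω ∂P :=
    integral_nonneg fun ω => Set.indicator_nonneg (fun _ _ => (Real.exp_pos _).le) ω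
  calc ∫ ω, auxM X c u l (n + 1) ω ∂P
      = ∫ ω, (H.indicator (auxM X c u l n) ω + F ω * G ω) ∂P :=
        integral_congr_ae (Filter.Eventually.of_forall hdec)
    _ = (∫ ω, H.indicator (auxM X c u l n) ω ∂P) + ∫ ω, F ω * G ω ∂P :=
        integral_add hi1 hi2
    _ = (∫ ω, H.indicator (auxM X c u l n) ω ∂P) + (∫ ω, F ω ∂P) * ∫ ω, G ω ∂P := by
        have hmul : ∫ ω, F ω * G ω ∂P = (∫ ω, F ω ∂P) * ∫ ω, G ω ∂P :=
          hFG.integral_fun_mul_eq_mul_integral hintF.1 hintG.1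
        rw [hmul]
    _ ≤ (∫ ω, H.indicator (auxM X c u l n) ω ∂P) + ∫ ω, F ω ∂P :=
        add_le_add_right (mul_le_of_le_one_right hFnn hGint) _
    _ = ∫ ω, (H.indicator (auxM X c u l n) ω + F ω) ∂P := (integral_add hi1 hintF).symm
    _ = ∫ ω, auxM X c u l n ω ∂P := by
        refine integral_congr_ae (Filter.Eventually.of_forall fun ω => ?_)
        show H.indicator (auxM X c u l n) ω + F ω = auxM X c u l n ω
        by_cases h : auxHit X c u l n ω
        · rw [Set.indicator_of_mem (show ω ∈ H from h), hFdef,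
            Set.indicator_of_notMem (Set.notMem_compl_iff.mpr (show ω ∈ H from h)), add_zero]
        · rw [Set.indicator_of_notMem (show ω ∉ H from h), hFdef,
            Set.indicator_of_mem (Set.mem_compl (show ω ∉ H from h)),
            zero_add, (auxM_spec n ω).1 h]

lemma integral_auxM_le_one (hmeas : ∀ i, Measurable (X i))
    (hindep : iIndepFun X P)
    (hint : ∀ i, Integrable (fun ω => Real.exp (l * X i ω)) P)
    (hlog : ∀ i, Real.log (∫ ω, Real.exp (l * X i ω) ∂P) ≤ c) (n : ℕ) :
    ∫ ω, auxM X c u l n ω ∂P ≤ 1 := by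
  induction n with
  | zero => simp [auxM]
  | succ n ih => exact (integral_auxM_succ_le hmeas hindep hint hlog n).trans ih

lemma meas_auxHit_le (hmeas : ∀ i, Measurable (X i))
    (hindep : iIndepFun X P)
    (hint : ∀ i, Integrable (fun ω => Real.exp (l * X i ω)) P)
    (hlog : ∀ i, Real.log (∫ ω, Real.exp (l * X i ω) ∂P) ≤ c) (n : ℕ) :
    P {ω | auxHit X c u l n ω} ≤ ENNReal.ofReal (Real.exp (-u)) := by
  have hsub : {ω | auxHit X c u l n ω} ⊆ {ω | Real.exp u ≤ auxM X c u l n ω} :=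
    fun ω h => ((auxM_spec n ω).2 h).le
  have hmark := mul_meas_ge_le_integral_of_nonneg
    (Filter.Eventually.of_forall (auxM_nonneg (X := X) (c := c) (u := u) (l := l) n))
    (integrable_auxM hmeas hindep hint n) (Real.exp u)
  have h1 : Real.exp u * (P {x | Real.exp u ≤ auxM X c u l n x}).toReal ≤ 1 :=
    hmark.trans (integral_auxM_le_one hmeas hindep hint hlog n)
  have h2 : (P {x | Real.exp u ≤ auxM X c u l n x}).toReal ≤ Real.exp (-u) := by
    have hpos := Real.exp_pos u
    calc (P {x | Real.exp u ≤ auxM X c u l n x}).toReal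
        = (Real.exp u * (P {x | Real.exp u ≤ auxM X c u l n x}).toReal) / Real.exp u := by
          field_simp
      _ ≤ 1 / Real.exp u := by gcongr
      _ = Real.exp (-u) := by rw [Real.exp_neg, one_div]
  calc P {ω | auxHit X c u l n ω}
      ≤ P {x | Real.exp u ≤ auxM X c u l n x} := measure_mono hsub
    _ = ENNReal.ofReal ((P {x | Real.exp u ≤ auxM X c u l n x}).toReal) :=
        (ENNReal.ofReal_toReal (measure_ne_top P _)).symm
    _ ≤ ENNReal.ofReal (Real.exp (-u)) := ENNReal.ofReal_le_ofReal h2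

end VilleAux

theorem stmt_1 {Ω : Type*} [MeasurableSpace Ω] (P : Measure Ω) [IsProbabilityMeasure P]
    (σ : ℝ) (hσ : 0 < σ) (X : ℕ → Ω → ℝ) (hmeas : ∀ i, Measurable (X i))
    (hindep : iIndepFun X P)
    (hsubg : ∀ (i : ℕ) (l : ℝ), Integrable (fun ω => Real.exp (l * X i ω)) P ∧
      Real.log (∫ ω, Real.exp (l * X i ω) ∂P) ≤ l ^ 2 * σ ^ 2 / 2)
    (l u : ℝ) (hu : 0 < u) :
    P {ω | ∃ t : ℕ, 1 ≤ t ∧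
        l * (∑ i ∈ Finset.range t, X i ω) - t * l ^ 2 * σ ^ 2 / 2 > u} ≤
      ENNReal.ofReal (Real.exp (-u)) := by
  set c := l ^ 2 * σ ^ 2 / 2 with hc
  have hint : ∀ i, Integrable (fun ω => Real.exp (l * X i ω)) P := fun i => (hsubg i l).1
  have hlog : ∀ i, Real.log (∫ ω, Real.exp (l * X i ω) ∂P) ≤ c := fun i => (hsubg i l).2
  have harith : ∀ (t : ℕ) (s : ℝ), l * s - (t : ℝ) * l ^ 2 * σ ^ 2 / 2 = l * s - (t : ℝ) * c := by
    intro t s; rw [hc]; ring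
  have hset : {ω | ∃ t : ℕ, 1 ≤ t ∧
      l * (∑ i ∈ Finset.range t, X i ω) - t * l ^ 2 * σ ^ 2 / 2 > u}
      = ⋃ n : ℕ, {ω | auxHit X c u l n ω} := by
    ext ω
    simp only [Set.mem_setOf_eq, Set.mem_iUnion, auxHit, auxS]
    constructor
    · rintro ⟨t, h1, h2⟩
      exact ⟨t, t, h1, le_refl t, by rwa [harith t _] at h2⟩
    · rintro ⟨n, t, h1, h2, h3⟩
      exact ⟨t, h1, by rwa [harith t _]⟩
  rw [hset]
  have hmono : Monotone fun n => {ω | auxHit X c u l n ω} :=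
    fun m n h ω hω => auxHit_mono h hω
  rw [hmono.measure_iUnion]
  exact iSup_le fun n => meas_auxHit_le hmeas hindep hint hlog n
end

section
/- Let σ > 0, z > 0, η > 0, k a positive integer, and t an integer such that (1+η)^{k−1} ≤ t ≤ (1+η)^k. Set A(η) = 4 / ((1+η)^{1/4} + (1+η)^{−1/4})² and λ = σ^{−1} √(2 z A(η) / (1+η)^{k−1/2}). Then σ√(2z) ≥ A(η) z / (λ √t) + λ σ² √t / 2. -/
set_option maxHeartbeats 1000000


theorem stmt_4 (σ z η : ℝ) (hσ : 0 < σ) (hz : 0 < z) (hη : 0 < η)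
    (k : ℕ) (hk : 1 ≤ k) (t : ℤ)
    (h1 : (1 + η) ^ ((k : ℝ) - 1) ≤ (t : ℝ)) (h2 : (t : ℝ) ≤ (1 + η) ^ (k : ℝ)) :
    let A : ℝ := 4 / ((1 + η) ^ ((1 : ℝ) / 4) + (1 + η) ^ (-(1 : ℝ) / 4)) ^ 2
    let l : ℝ := σ⁻¹ * Real.sqrt (2 * z * A / (1 + η) ^ ((k : ℝ) - 1 / 2))
    A * z / (l * Real.sqrt (t : ℝ)) + l * σ ^ 2 * Real.sqrt (t : ℝ) / 2 ≤
      σ * Real.sqrt (2 * z) := by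
  intro A l
  have hp0 : (0:ℝ) < 1 + η := by linarith
  have hp1 : (1:ℝ) < 1 + η := by linarith
  set c : ℝ := (1 + η) ^ ((1:ℝ)/4) with hc_def
  have hc : 0 < c := Real.rpow_pos_of_pos hp0 _
  have hA : A = 4 / (c + c⁻¹) ^ 2 := by
    show (4:ℝ) / ((1 + η) ^ ((1:ℝ)/4) + (1 + η) ^ (-(1:ℝ)/4)) ^ 2 = _
    rw [show (-(1:ℝ)/4) = -((1:ℝ)/4) by ring, Real.rpow_neg hp0.le]
  have hcc : 0 < c + c⁻¹ := by positivity
  have hA0 : 0 < A := by rw [hA]; positivity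
  set B : ℝ := (1 + η) ^ ((k:ℝ) - 1/2) with hB_def
  have hB : 0 < B := Real.rpow_pos_of_pos hp0 _
  have hc2 : c ^ 2 = (1 + η) ^ ((1:ℝ)/2) := by
    rw [hc_def, ← Real.rpow_natCast ((1 + η) ^ ((1:ℝ)/4)) 2, ← Real.rpow_mul hp0.le]
    norm_num
  have hBk : B * c ^ 2 = (1 + η) ^ (k:ℝ) := by
    rw [hc2, hB_def, ← Real.rpow_add hp0]
    norm_num
  have hBk' : (1 + η) ^ ((k:ℝ) - 1) * c ^ 2 = B := by
    rw [hc2, hB_def, ← Real.rpow_add hp0]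
    ring_nf
  have ht0 : (0:ℝ) < (t:ℝ) := lt_of_lt_of_le (Real.rpow_pos_of_pos hp0 _) h1
  set q : ℝ := (t:ℝ) / B with hq_def
  have hq0 : 0 < q := div_pos ht0 hB
  have hq1 : q ≤ c ^ 2 := by
    rw [hq_def, div_le_iff₀ hB]
    calc (t:ℝ) ≤ (1+η) ^ (k:ℝ) := h2
      _ = B * c ^ 2 := hBk.symm
      _ = c ^ 2 * B := by ring
  have hq2 : 1 ≤ q * c ^ 2 := by
    rw [hq_def, div_mul_eq_mul_div, le_div_iff₀ hB]
    calc 1 * B = (1 + η) ^ ((k:ℝ) - 1) * c ^ 2 := by rw [one_mul, hBk']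
      _ ≤ (t:ℝ) * c ^ 2 := by nlinarith [sq_nonneg c]
  -- key algebraic inequality
  have h4q : A * (1 + q) ^ 2 ≤ 4 * q := by
    have hd : (c + c⁻¹) ^ 2 = (c ^ 2 + 1) ^ 2 / c ^ 2 := by
      field_simp
    rw [hA, hd]
    rw [div_div_eq_mul_div, div_mul_eq_mul_div, div_le_iff₀ (by positivity)]
    nlinarith [mul_nonneg (sub_nonneg.2 hq1) (sub_nonneg.2 hq2), sq_nonneg c, hq0]
  have hsq : (A * (1 + q) / 2) ^ 2 ≤ A * q := by
    nlinarith [mul_le_mul_of_nonneg_left h4q hA0.le]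
  have key : A * (1 + q) ≤ 2 * Real.sqrt (A * q) := by
    have h1' := Real.sqrt_le_sqrt hsq
    rw [Real.sqrt_sq (by positivity)] at h1'
    linarith
  -- set up s, u
  set s : ℝ := Real.sqrt (2 * z * A / B) with hs_def
  have hsarg : 0 < 2 * z * A / B := by positivity
  have hs : 0 < s := Real.sqrt_pos.2 hsarg
  set u : ℝ := Real.sqrt (t:ℝ) with hu_def
  have hu : 0 < u := Real.sqrt_pos.2 ht0
  have hs2 : s ^ 2 = 2 * z * A / B := Real.sq_sqrt hsarg.le
  have hu2 : u ^ 2 = (t:ℝ) := Real.sq_sqrt ht0.le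
  have hprod : s * u * Real.sqrt (2 * z) = 2 * z * Real.sqrt (A * q) := by
    rw [hs_def, hu_def, ← Real.sqrt_mul hsarg.le, ← Real.sqrt_mul (by positivity)]
    rw [show 2 * z * A / B * (t:ℝ) * (2 * z) = (2*z)^2 * (A * ((t:ℝ)/B)) by
      field_simp]
    rw [Real.sqrt_mul (by positivity), Real.sqrt_sq (by positivity)]
  have goal2 : A * z + s ^ 2 * u ^ 2 / 2 ≤ s * u * Real.sqrt (2 * z) := by
    rw [hs2, hu2, hprod]
    have harg : 2 * z * A / B * (t:ℝ) / 2 = z * (A * q) := by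
      rw [hq_def]; field_simp
    rw [harg]
    nlinarith [mul_le_mul_of_nonneg_left key hz.le]
  have hl : l = σ⁻¹ * s := rfl
  rw [hl]
  have hrw : A * z / (σ⁻¹ * s * u) + σ⁻¹ * s * σ ^ 2 * u / 2 =
      σ * (A * z + s ^ 2 * u ^ 2 / 2) / (s * u) := by
    field_simp
  rw [hrw, div_le_iff₀ (by positivity)]
  nlinarith [mul_le_mul_of_nonneg_left goal2 hσ.le]
end

section
/- Let d(x,y) = x·log(x/y) + (1−x)·log((1−x)/(1−y)) be the binary Kullback–Leibler divergence. Then for every δ with 0 < δ ≤ 0.15, one has d(1−δ, δ) ≥ log(1/(2δ)). -/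
/-- The Kullback-Leibler divergence between Bernoulli distributions of
parameters `x` and `y`. -/
noncomputable def klBernoulli (x y : ℝ) : ℝ :=
  x * Real.log (x / y) + (1 - x) * Real.log ((1 - x) / (1 - y))

theorem stmt_9 (δ : ℝ) (h0 : 0 < δ) (h1 : δ ≤ 0.15) :
    Real.log (1 / (2 * δ)) ≤ klBernoulli (1 - δ) δ := by
  have h1δ : (0:ℝ) < 1 - δ := by linarith
  have e1 : Real.log ((1-δ)/δ) = Real.log (1-δ) - Real.log δ :=
    Real.log_div h1δ.ne' h0.ne'
  have e2 : Real.log ((1-(1-δ))/(1-δ)) = Real.log δ - Real.log (1-δ) := by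
    rw [show 1-(1-δ) = δ by ring, Real.log_div h0.ne' h1δ.ne']
  have e3 : Real.log (1/(2*δ)) = -(Real.log 2 + Real.log δ) := by
    rw [one_div, Real.log_inv, Real.log_mul two_ne_zero h0.ne']
  -- lower bound for log(1-δ): log x ≥ 1 - 1/x
  have hlb : 1 - 1/(1-δ) ≤ Real.log (1-δ) := by
    have h := Real.log_le_sub_one_of_pos (show (0:ℝ) < (1-δ)⁻¹ by positivity)
    rw [Real.log_inv] at h
    have : (1-δ)⁻¹ = 1/(1-δ) := (one_div _).symm
    linarith [h, this ▸ h]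
  -- lower bound for δ * log δ
  have hla : δ - 3/20 - δ * Real.log (20/3) ≤ δ * Real.log δ := by
    have hpos : (0:ℝ) < 20*δ/3 := by positivity
    have h := Real.log_le_sub_one_of_pos (show (0:ℝ) < (20*δ/3)⁻¹ by positivity)
    rw [Real.log_inv] at h
    have hlog : Real.log (20*δ/3) = Real.log δ + Real.log (20/3) := by
      rw [show 20*δ/3 = δ * (20/3) by ring, Real.log_mul h0.ne' (by norm_num)]
    have hinv : (20*δ/3)⁻¹ = 3/(20*δ) := by
      field_simp
    rw [hlog, hinv] at h
    -- h : -(log δ + log (20/3)) ≤ 3/(20*δ) - 1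
    have := mul_le_mul_of_nonneg_left h h0.le
    have hd : δ * (3/(20*δ)) = 3/20 := by field_simp
    nlinarith [this, hd]
  -- upper bound for log(20/3)
  have h203 : Real.log (20/3) ≤ 1369/500 * Real.log 2 := by
    have hp : ((20:ℝ)/3)^(500:ℕ) ≤ 2^(1369:ℕ) := by
      rw [div_pow, div_le_iff₀ (by positivity)]
      norm_num
      exact_mod_cast (show (20:ℕ)^500 ≤ 2^1369*3^500 by set_option maxRecDepth 100000 in decide)
    have hlog := Real.log_le_log (by positivity) hp
    rw [Real.log_pow, Real.log_pow] at hlog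
    push_cast at hlog
    linarith
  have hl2 : (0.6931471803:ℝ) < Real.log 2 := Real.log_two_gt_d9
  have hl2' : Real.log 2 < 0.6931471808 := Real.log_two_lt_d9
  -- combine
  have hbound : δ * Real.log (20/3) ≤ δ * (1369/500 * 0.6931471808) := by
    have : Real.log (20/3) ≤ 1369/500 * 0.6931471808 := by nlinarith
    nlinarith
  have key : -(Real.log 2 + Real.log δ) ≤ (1-2*δ) * (Real.log (1-δ) - Real.log δ) := by
    have h1b : 0 ≤ 1 - 2*δ := by linarith
    have hmul : (1-2*δ) * (1 - 1/(1-δ)) ≤ (1-2*δ) * Real.log (1-δ) :=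
      mul_le_mul_of_nonneg_left hlb h1b
    have hmul' : -((1-2*δ)*δ)/(1-δ) ≤ (1-2*δ) * Real.log (1-δ) := by
      have he : (1-2*δ) * (1 - 1/(1-δ)) = -((1-2*δ)*δ)/(1-δ) := by
        field_simp
        ring
      linarith [he ▸ hmul]
    have hclean : -(20/17)*((1-2*δ)*δ) ≤ (1-2*δ) * Real.log (1-δ) := by
      refine le_trans ?_ hmul'
      rw [le_div_iff₀ h1δ]
      nlinarith [mul_nonneg (mul_nonneg h1b h0.le) (show (0:ℝ) ≤ 3/20 - δ by linarith)]
    nlinarith [hclean, hla, hbound, hl2, sq_nonneg (δ - 3/20)]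
  rw [e3]
  unfold klBernoulli
  rw [e1, e2]
  nlinarith [key]
end

section
/- Let μ₁ > μ₂ be real numbers and σ₁, σ₂ > 0. Then the infimum, over all pairs (a, b) ∈ ℝ² with a < b, of max( (a−μ₁)²/(2σ₁²), (b−μ₂)²/(2σ₂²) ) equals (μ₁−μ₂)² / (2(σ₁+σ₂)²). -/
theorem stmt_10 (μ₁ μ₂ σ₁ σ₂ : ℝ) (hμ : μ₂ < μ₁) (hσ₁ : 0 < σ₁) (hσ₂ : 0 < σ₂) :
    sInf {v : ℝ | ∃ a b : ℝ, a < b ∧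
        v = max ((a - μ₁) ^ 2 / (2 * σ₁ ^ 2)) ((b - μ₂) ^ 2 / (2 * σ₂ ^ 2))} =
      (μ₁ - μ₂) ^ 2 / (2 * (σ₁ + σ₂) ^ 2) := by
  set S := {v : ℝ | ∃ a b : ℝ, a < b ∧
      v = max ((a - μ₁) ^ 2 / (2 * σ₁ ^ 2)) ((b - μ₂) ^ 2 / (2 * σ₂ ^ 2))} with hS
  set c := (μ₁ - μ₂) ^ 2 / (2 * (σ₁ + σ₂) ^ 2) with hc
  have hσ₁2 : (0:ℝ) < 2 * σ₁ ^ 2 := by positivity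
  have hσ₂2 : (0:ℝ) < 2 * σ₂ ^ 2 := by positivity
  have hσs : (0:ℝ) < 2 * (σ₁ + σ₂) ^ 2 := by positivity
  have hd : 0 < μ₁ - μ₂ := by linarith
  set x := (σ₂ * μ₁ + σ₁ * μ₂) / (σ₁ + σ₂) with hx
  have hσsum : (0:ℝ) < σ₁ + σ₂ := by linarith
  have hx1 : (x - μ₁) ^ 2 / (2 * σ₁ ^ 2) = c := by
    rw [hx, hc]; field_simp; ring
  have ht : x - μ₂ = σ₂ * (μ₁ - μ₂) / (σ₁ + σ₂) := by
    rw [hx]; field_simp; ring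
  have htpos : 0 < x - μ₂ := by rw [ht]; positivity
  have hne : S.Nonempty := ⟨_, x, x + 1, by linarith, rfl⟩
  have hbdd : BddBelow S := by
    refine ⟨0, fun v hv => ?_⟩
    obtain ⟨a, b, _, rfl⟩ := hv
    exact le_trans (by positivity) (le_max_left _ _)
  refine le_antisymm ?_ (le_csInf hne ?_)
  · -- sInf S ≤ c
    refine le_of_forall_pos_le_add fun ε hε => ?_
    have h2t : 0 < 2 * (x - μ₂) + 1 := by linarith
    set δ := min 1 (σ₂ ^ 2 * ε / (2 * (x - μ₂) + 1)) with hδ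
    have hδpos : 0 < δ := lt_min one_pos (by positivity)
    have hδ1 : δ ≤ 1 := min_le_left _ _
    have hmem : max ((x - μ₁) ^ 2 / (2 * σ₁ ^ 2)) ((x + δ - μ₂) ^ 2 / (2 * σ₂ ^ 2)) ∈ S :=
      ⟨x, x + δ, by linarith, rfl⟩
    refine le_trans (csInf_le hbdd hmem) ?_
    have h1 : (x - μ₁) ^ 2 / (2 * σ₁ ^ 2) ≤ c + ε := by rw [hx1]; linarith
    have h2 : (x + δ - μ₂) ^ 2 / (2 * σ₂ ^ 2) ≤ c + ε := by
      rw [div_le_iff₀ hσ₂2]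
      have hc' : (x - μ₂) ^ 2 = c * (2 * σ₂ ^ 2) := by
        rw [ht, hc]; field_simp
      have hδ2' : δ * (2 * (x - μ₂) + 1) ≤ σ₂ ^ 2 * ε :=
        calc δ * (2 * (x - μ₂) + 1)
            ≤ (σ₂ ^ 2 * ε / (2 * (x - μ₂) + 1)) * (2 * (x - μ₂) + 1) :=
              mul_le_mul_of_nonneg_right (min_le_right _ _) h2t.le
          _ = σ₂ ^ 2 * ε := by field_simp
      nlinarith [sq_nonneg δ, hδpos, hδ1, htpos]
    exact max_le h1 h2
  · -- lower bound
    rintro v ⟨a, b, hab, rfl⟩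
    have hv1 : (a - μ₁) ^ 2 ≤ max ((a - μ₁) ^ 2 / (2 * σ₁ ^ 2)) ((b - μ₂) ^ 2 / (2 * σ₂ ^ 2)) * (2 * σ₁ ^ 2) := by
      rw [← div_le_iff₀ hσ₁2]; exact le_max_left _ _
    have hv2 : (b - μ₂) ^ 2 ≤ max ((a - μ₁) ^ 2 / (2 * σ₁ ^ 2)) ((b - μ₂) ^ 2 / (2 * σ₂ ^ 2)) * (2 * σ₂ ^ 2) := by
      rw [← div_le_iff₀ hσ₂2]; exact le_max_right _ _
    set w := max ((a - μ₁) ^ 2 / (2 * σ₁ ^ 2)) ((b - μ₂) ^ 2 / (2 * σ₂ ^ 2)) with hw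
    have hw0 : 0 ≤ w := le_trans (by positivity) (le_max_left _ _)
    rw [hc, div_le_iff₀ hσs]
    have key : σ₁ * σ₂ * (2 * ((μ₁ - a) * (b - μ₂))) ≤ σ₁ * σ₂ * (4 * (σ₁ * σ₂) * w) := by
      nlinarith [sq_nonneg (σ₂ * (μ₁ - a) - σ₁ * (b - μ₂)),
        mul_le_mul_of_nonneg_left hv1 (sq_nonneg σ₂),
        mul_le_mul_of_nonneg_left hv2 (sq_nonneg σ₁)]
    have hpq : 2 * ((μ₁ - a) * (b - μ₂)) ≤ 4 * (σ₁ * σ₂) * w :=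
      le_of_mul_le_mul_left key (mul_pos hσ₁ hσ₂)
    have hsum : μ₁ - μ₂ ≤ (μ₁ - a) + (b - μ₂) := by linarith
    have hsq : (μ₁ - μ₂) ^ 2 ≤ ((μ₁ - a) + (b - μ₂)) ^ 2 :=
      pow_le_pow_left₀ hd.le hsum 2
    nlinarith [hv1, hv2, hpq, hsq]
end

section
/- Let 0 < μ₂ < μ₁ < 1, let θ_a = log(μ_a/(1−μ_a)) for a = 1, 2, and let m(θ) = 1/(1+exp(−θ)). Let n₁, n₂ ≥ 1 be integers, set α = n₁/(n₁+n₂) and m_α = m(α θ₁ + (1−α) θ₂). Let X₁,…,X_{n₁}, Y₁,…,Y_{n₂} be jointly independent random variables such that each Xᵢ is Bernoulli with parameter μ₁ and each Yⱼ is Bernoulli with parameter μ₂. Then P( (1/n₁) Σ_{i=1}^{n₁} Xᵢ < (1/n₂) Σ_{j=1}^{n₂} Yⱼ ) ≤ exp( − (n₁+n₂) · ( α·d(m_α, μ₁) + (1−α)·d(m_α, μ₂) ) ). -/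
open MeasureTheory ProbabilityTheory

/-- The Bernoulli distribution of parameter `p`, as a measure on `ℝ`:
it puts mass `p` at `1` and mass `1 - p` at `0`. -/
noncomputable def bernoulliReal (p : ℝ) : Measure ℝ :=
  ENNReal.ofReal p • Measure.dirac 1 + ENNReal.ofReal (1 - p) • Measure.dirac 0

lemma integrable_dirac_real (f : ℝ → ℝ) (a : ℝ) : Integrable f (Measure.dirac a) := by
  have h : f =ᵐ[Measure.dirac a] fun _ => f a := by
    rw [MeasureTheory.ae_dirac_eq]
    exact Filter.eventually_pure.mpr rfl
  exact (integrable_const (f a)).congr h.symm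

lemma integrable_bernoulliReal (p : ℝ) (f : ℝ → ℝ) : Integrable f (bernoulliReal p) := by
  unfold bernoulliReal
  refine integrable_add_measure.mpr ⟨?_, ?_⟩
  · exact (integrable_dirac_real f 1).smul_measure ENNReal.ofReal_ne_top
  · exact (integrable_dirac_real f 0).smul_measure ENNReal.ofReal_ne_top

lemma integral_bernoulliReal {p : ℝ} (hp0 : 0 ≤ p) (hp1 : p ≤ 1) (f : ℝ → ℝ) :
    ∫ x, f x ∂(bernoulliReal p) = p * f 1 + (1 - p) * f 0 := by
  unfold bernoulliReal
  rw [integral_add_measure ((integrable_dirac_real f 1).smul_measure ENNReal.ofReal_ne_top)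
    ((integrable_dirac_real f 0).smul_measure ENNReal.ofReal_ne_top),
    integral_smul_measure, integral_smul_measure, integral_dirac, integral_dirac,
    ENNReal.toReal_ofReal hp0, ENNReal.toReal_ofReal (by linarith : (0:ℝ) ≤ 1 - p)]
  simp [smul_eq_mul]

set_option maxHeartbeats 1000000 in
theorem stmt_14 {Ω : Type*} [MeasurableSpace Ω] (P : Measure Ω) [IsProbabilityMeasure P]
    (μ₁ μ₂ : ℝ) (h₂ : 0 < μ₂) (h₁₂ : μ₂ < μ₁) (h₁ : μ₁ < 1)
    (n₁ n₂ : ℕ) (hn₁ : 1 ≤ n₁) (hn₂ : 1 ≤ n₂)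
    (Z : ℕ → Ω → ℝ) (hmeas : ∀ i, Measurable (Z i))
    (hindep : iIndepFun Z P)
    (hX : ∀ i < n₁, Measure.map (Z i) P = bernoulliReal μ₁)
    (hY : ∀ i, n₁ ≤ i → i < n₁ + n₂ → Measure.map (Z i) P = bernoulliReal μ₂) :
    let θ₁ : ℝ := Real.log (μ₁ / (1 - μ₁))
    let θ₂ : ℝ := Real.log (μ₂ / (1 - μ₂))
    let α : ℝ := n₁ / (n₁ + n₂)
    let mα : ℝ := 1 / (1 + Real.exp (-(α * θ₁ + (1 - α) * θ₂)))
    P {ω | (∑ i ∈ Finset.range n₁, Z i ω) / n₁ <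
        (∑ i ∈ Finset.Ico n₁ (n₁ + n₂), Z i ω) / n₂} ≤
      ENNReal.ofReal (Real.exp (-(n₁ + n₂ : ℝ) *
        (α * klBernoulli mα μ₁ + (1 - α) * klBernoulli mα μ₂))) := by
  intro θ₁ θ₂ α mα
  have hθ₁ : θ₁ = Real.log (μ₁ / (1 - μ₁)) := rfl
  have hθ₂ : θ₂ = Real.log (μ₂ / (1 - μ₂)) := rfl
  have hα : α = (n₁ : ℝ) / ((n₁ : ℝ) + (n₂ : ℝ)) := rfl
  have hmα : mα = 1 / (1 + Real.exp (-(α * θ₁ + (1 - α) * θ₂))) := rfl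
  clear_value θ₁ θ₂ α mα
  set θα : ℝ := α * θ₁ + (1 - α) * θ₂ with hθα
  clear_value θα
  -- basic positivity
  have hμ₁ : 0 < μ₁ := h₂.trans h₁₂
  have h1μ₁ : 0 < 1 - μ₁ := by linarith
  have h1μ₂ : 0 < 1 - μ₂ := by linarith
  have hn₁R : (0:ℝ) < n₁ := by exact_mod_cast hn₁
  have hn₂R : (0:ℝ) < n₂ := by exact_mod_cast hn₂
  have hNR : (0:ℝ) < (n₁:ℝ) + n₂ := by linarith
  have hE₁ : Real.exp θ₁ = μ₁ / (1 - μ₁) := by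
    rw [hθ₁]; exact Real.exp_log (div_pos hμ₁ h1μ₁)
  have hE₂ : Real.exp θ₂ = μ₂ / (1 - μ₂) := by
    rw [hθ₂]; exact Real.exp_log (div_pos h₂ h1μ₂)
  have hD₁ : (0:ℝ) < 1 + Real.exp θ₁ := by positivity
  have hD₂ : (0:ℝ) < 1 + Real.exp θ₂ := by positivity
  have hDα : (0:ℝ) < 1 + Real.exp θα := by positivity
  have hμ₁val : μ₁ = Real.exp θ₁ / (1 + Real.exp θ₁) := by
    have h : Real.exp θ₁ * (1 - μ₁) = μ₁ := by
      rw [hE₁]; field_simp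
    field_simp
    linarith [h]
  have hμ₂val : μ₂ = Real.exp θ₂ / (1 + Real.exp θ₂) := by
    have h : Real.exp θ₂ * (1 - μ₂) = μ₂ := by
      rw [hE₂]; field_simp
    field_simp
    linarith [h]
  have h1μ₁val : 1 - μ₁ = 1 / (1 + Real.exp θ₁) := by
    rw [hμ₁val]; field_simp; ring
  have h1μ₂val : 1 - μ₂ = 1 / (1 + Real.exp θ₂) := by
    rw [hμ₂val]; field_simp; ring
  have hmαval : mα = Real.exp θα / (1 + Real.exp θα) := by
    rw [hmα, Real.exp_neg]
    rw [eq_div_iff hDα.ne']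
    field_simp
    ring
  have h1mα : 1 - mα = 1 / (1 + Real.exp θα) := by
    rw [hmαval]; field_simp; ring
  have hmαpos : 0 < mα := by rw [hmαval]; positivity
  have h1mαpos : 0 < 1 - mα := by rw [h1mα]; positivity
  -- θ ordering
  have hθ₂₁ : θ₂ < θ₁ := by
    rw [hθ₁, hθ₂]
    apply Real.log_lt_log (div_pos h₂ h1μ₂)
    rw [div_lt_div_iff₀ h1μ₂ h1μ₁]
    nlinarith
  set s : ℝ := (θ₁ - θ₂) / ((n₁:ℝ) + n₂) with hsdef
  have hs : 0 < s := div_pos (by linarith) hNR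
  have hc1 : -(s * n₂) = θα - θ₁ := by
    rw [hsdef, hθα, hα]; field_simp; ring
  have hc2 : s * n₁ = θα - θ₂ := by
    rw [hsdef, hθα, hα]; field_simp; ring
  -- KL identities
  have hd₁ : klBernoulli mα μ₁ =
      mα * (θα - θ₁) + Real.log (1 + Real.exp θ₁) - Real.log (1 + Real.exp θα) := by
    unfold klBernoulli
    have hq1 : mα / μ₁ =
        Real.exp (θα - θ₁) * ((1 + Real.exp θ₁) / (1 + Real.exp θα)) := by
      rw [hmαval, hμ₁val, Real.exp_sub]
      field_simp
    have hq2 : (1 - mα) / (1 - μ₁) = (1 + Real.exp θ₁) / (1 + Real.exp θα) := by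
      rw [h1mα, h1μ₁val]
      field_simp
    rw [hq1, hq2, Real.log_mul (Real.exp_ne_zero _) (by positivity),
      Real.log_exp, Real.log_div hD₁.ne' hDα.ne']
    ring
  have hd₂ : klBernoulli mα μ₂ =
      mα * (θα - θ₂) + Real.log (1 + Real.exp θ₂) - Real.log (1 + Real.exp θα) := by
    unfold klBernoulli
    have hq1 : mα / μ₂ =
        Real.exp (θα - θ₂) * ((1 + Real.exp θ₂) / (1 + Real.exp θα)) := by
      rw [hmαval, hμ₂val, Real.exp_sub]
      field_simp
    have hq2 : (1 - mα) / (1 - μ₂) = (1 + Real.exp θ₂) / (1 + Real.exp θα) := by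
      rw [h1mα, h1μ₂val]
      field_simp
    rw [hq1, hq2, Real.log_mul (Real.exp_ne_zero _) (by positivity),
      Real.log_exp, Real.log_div hD₂.ne' hDα.ne']
    ring
  have hNα : ((n₁:ℝ) + n₂) * α = n₁ := by rw [hα]; field_simp
  have hNα' : ((n₁:ℝ) + n₂) * (1 - α) = n₂ := by rw [hα]; field_simp; ring
  have hexp_eq : -((n₁:ℝ) + n₂) * (α * klBernoulli mα μ₁ + (1 - α) * klBernoulli mα μ₂) =
      ((n₁:ℝ) + n₂) * Real.log (1 + Real.exp θα)
        - (n₁:ℝ) * Real.log (1 + Real.exp θ₁) - (n₂:ℝ) * Real.log (1 + Real.exp θ₂) := by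
    rw [hd₁, hd₂, hθα]
    linear_combination (-(Real.log (1 + Real.exp θ₁))) * hNα
      + (-(Real.log (1 + Real.exp θ₂))) * hNα'
  -- the moment generating function values
  set F₁ : ℝ := μ₁ * Real.exp (θα - θ₁) + (1 - μ₁) with hF₁def
  set F₂ : ℝ := μ₂ * Real.exp (θα - θ₂) + (1 - μ₂) with hF₂def
  have hF₁ : F₁ = (1 + Real.exp θα) / (1 + Real.exp θ₁) := by
    rw [hF₁def, Real.exp_sub, hμ₁val]
    field_simp
    ring
  have hF₂ : F₂ = (1 + Real.exp θα) / (1 + Real.exp θ₂) := by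
    rw [hF₂def, Real.exp_sub, hμ₂val]
    field_simp
    ring
  have hRHS : Real.exp (-((n₁:ℝ) + n₂) *
      (α * klBernoulli mα μ₁ + (1 - α) * klBernoulli mα μ₂)) = F₁ ^ n₁ * F₂ ^ n₂ := by
    have harg : -((n₁:ℝ) + n₂) * (α * klBernoulli mα μ₁ + (1 - α) * klBernoulli mα μ₂) =
        ((n₁ + n₂ : ℕ) : ℝ) * Real.log (1 + Real.exp θα) -
          (((n₁ : ℕ) : ℝ) * Real.log (1 + Real.exp θ₁) +
            ((n₂ : ℕ) : ℝ) * Real.log (1 + Real.exp θ₂)) := by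
      rw [hexp_eq]; push_cast; ring
    rw [harg, Real.exp_sub, Real.exp_add, Real.exp_nat_mul, Real.exp_nat_mul, Real.exp_nat_mul,
      Real.exp_log hDα, Real.exp_log hD₁, Real.exp_log hD₂, hF₁, hF₂]
    rw [div_pow, div_pow, pow_add]
    field_simp
  -- the weighted variables
  set c : ℕ → ℝ := fun i => if i < n₁ then θα - θ₁ else θα - θ₂ with hcdef
  set V : ℕ → Ω → ℝ := fun i ω => c i * Z i ω with hVdef
  have hVmeas : ∀ i, Measurable (V i) := fun i => (hmeas i).const_mul (c i)
  have hVindep : iIndepFun V P := by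
    exact hindep.comp (fun i x => c i * x) (fun i => measurable_const_mul (c i))
  set W : Ω → ℝ := ∑ i ∈ Finset.range (n₁ + n₂), V i with hWdef
  -- integrability
  have hlaw : ∀ i ∈ Finset.range (n₁ + n₂),
      Measure.map (Z i) P = bernoulliReal (if i < n₁ then μ₁ else μ₂) := by
    intro i hi
    split_ifs with h
    · exact hX i h
    · exact hY i (not_lt.mp h) (Finset.mem_range.mp hi)
  have hgmeas : ∀ i, Measurable fun x : ℝ => Real.exp (c i * x) := fun i =>
    Real.measurable_exp.comp (measurable_const_mul (c i))
  have hint : ∀ i ∈ Finset.range (n₁ + n₂),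
      Integrable (fun ω => Real.exp (1 * V i ω)) P := by
    intro i hi
    simp only [one_mul, hVdef]
    have := (integrable_map_measure (hgmeas i).aestronglyMeasurable
      (hmeas i).aemeasurable).mp (by
        rw [hlaw i hi]; exact integrable_bernoulliReal _ _)
    exact this
  have hintW : Integrable (fun ω => Real.exp (1 * W ω)) P :=
    hVindep.integrable_exp_mul_sum hVmeas hint
  -- mgf of each variable
  have hmgf : ∀ i ∈ Finset.range (n₁ + n₂),
      mgf (V i) P 1 = (if i < n₁ then F₁ else F₂) := by
    intro i hi
    unfold mgf
    simp only [one_mul, hVdef]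
    rw [← integral_map (hmeas i).aemeasurable (hgmeas i).aestronglyMeasurable, hlaw i hi]
    split_ifs with h
    · rw [integral_bernoulliReal hμ₁.le h₁.le]
      simp only [mul_one, mul_zero, Real.exp_zero]
      rw [hF₁def]
      congr 2
      simp [hcdef, h]
    · rw [integral_bernoulliReal h₂.le (by linarith : μ₂ ≤ 1)]
      simp only [mul_one, mul_zero, Real.exp_zero]
      rw [hF₂def]
      congr 2
      simp [hcdef, h]
  have hmgfW : mgf W P 1 = F₁ ^ n₁ * F₂ ^ n₂ := by
    rw [hWdef, hVindep.mgf_sum hVmeas]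
    rw [← Finset.prod_range_mul_prod_Ico _ (Nat.le_add_right n₁ n₂)]
    congr 1
    · rw [Finset.prod_congr rfl (fun i hi => by
        rw [hmgf i (Finset.mem_range.mpr (lt_of_lt_of_le (Finset.mem_range.mp hi)
          (Nat.le_add_right n₁ n₂))), if_pos (Finset.mem_range.mp hi)]),
        Finset.prod_const, Finset.card_range]
    · rw [Finset.prod_congr rfl (fun i hi => by
        rw [hmgf i (Finset.mem_range.mpr (Finset.mem_Ico.mp hi).2),
          if_neg (not_lt.mpr (Finset.mem_Ico.mp hi).1)]),
        Finset.prod_const, Nat.card_Ico, Nat.add_sub_cancel_left]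
  -- event inclusion
  have hsub : {ω | (∑ i ∈ Finset.range n₁, Z i ω) / n₁ <
      (∑ i ∈ Finset.Ico n₁ (n₁ + n₂), Z i ω) / n₂} ⊆ {ω | (0:ℝ) ≤ W ω} := by
    intro ω hω
    simp only [Set.mem_setOf_eq] at hω ⊢
    have hWω : W ω = ∑ i ∈ Finset.range (n₁ + n₂), c i * Z i ω := by
      rw [hWdef]; simp [hVdef]
    rw [hWω, ← Finset.sum_range_add_sum_Ico _ (Nat.le_add_right n₁ n₂)]
    have e1 : ∑ i ∈ Finset.range n₁, c i * Z i ω =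
        -(s * n₂) * ∑ i ∈ Finset.range n₁, Z i ω := by
      rw [Finset.mul_sum]
      refine Finset.sum_congr rfl fun i hi => ?_
      rw [hcdef]
      simp only [if_pos (Finset.mem_range.mp hi)]
      rw [hc1]
    have e2 : ∑ i ∈ Finset.Ico n₁ (n₁ + n₂), c i * Z i ω =
        s * n₁ * ∑ i ∈ Finset.Ico n₁ (n₁ + n₂), Z i ω := by
      rw [Finset.mul_sum]
      refine Finset.sum_congr rfl fun i hi => ?_
      rw [hcdef]
      simp only [if_neg (not_lt.mpr (Finset.mem_Ico.mp hi).1)]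
      rw [hc2]
    rw [e1, e2]
    have h' := (div_lt_div_iff₀ hn₁R hn₂R).mp hω
    linarith [mul_lt_mul_of_pos_left h' hs]
  -- Chernoff
  have hch := measure_ge_le_exp_mul_mgf (X := W) (μ := P) 0 zero_le_one hintW
  rw [hmgfW] at hch
  simp only [mul_zero, neg_zero, Real.exp_zero, one_mul, neg_mul] at hch
  calc P {ω | (∑ i ∈ Finset.range n₁, Z i ω) / n₁ <
      (∑ i ∈ Finset.Ico n₁ (n₁ + n₂), Z i ω) / n₂}
      ≤ P {ω | (0:ℝ) ≤ W ω} := measure_mono hsub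
    _ ≤ ENNReal.ofReal (Real.exp (-((n₁:ℝ) + n₂) *
        (α * klBernoulli mα μ₁ + (1 - α) * klBernoulli mα μ₂))) := by
        rw [ENNReal.le_ofReal_iff_toReal_le (measure_ne_top _ _) (Real.exp_nonneg _)]
        rw [hRHS]
        exact hch
end

section
/- Let 0 < μ₂ < μ₁ < 1 and let θ_a = log(μ_a/(1−μ_a)) for a = 1, 2, with m(θ) = 1/(1+exp(−θ)). For α ∈ [0,1] define g(α) = α·d(m(αθ₁+(1−α)θ₂), μ₁) + (1−α)·d(m(αθ₁+(1−α)θ₂), μ₂). Let m* ∈ (μ₂, μ₁) satisfy d(m*, μ₁) = d(m*, μ₂), let θ* = log(m*/(1−m*)), and set α* = (θ* − θ₂)/(θ₁ − θ₂). Then α* ∈ (0,1), g(α*) = d(m*, μ₁), and for every α ∈ [0,1], g(α) ≤ g(α*). -/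
lemma softplus_tangent (x y : ℝ) :
    (y - x) * (Real.exp x / (1 + Real.exp x)) ≤
      Real.log (1 + Real.exp y) - Real.log (1 + Real.exp x) := by
  have hx : (0:ℝ) < 1 + Real.exp x := by positivity
  have hy : (0:ℝ) < 1 + Real.exp y := by positivity
  set c : ℝ := Real.exp x / (1 + Real.exp x) with hc
  have hc0 : 0 ≤ c := by positivity
  have hc1 : c ≤ 1 := by
    rw [hc, div_le_one hx]; linarith [Real.exp_pos x]
  have hkey := convexOn_exp.2 (Set.mem_univ (0:ℝ)) (Set.mem_univ (y - x))
      (by linarith : (0:ℝ) ≤ 1 - c) hc0 (by ring)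
  simp only [smul_eq_mul, mul_zero, zero_add, Real.exp_zero, mul_one] at hkey
  have hxy : Real.exp x * Real.exp (y - x) = Real.exp y := by
    rw [← Real.exp_add]; ring_nf
  have h2 : (1 - c) + c * Real.exp (y - x) = (1 + Real.exp y) / (1 + Real.exp x) := by
    rw [hc, ← hxy]; field_simp; ring
  rw [h2] at hkey
  have h3 := Real.log_le_log (Real.exp_pos _) hkey
  rw [Real.log_exp, Real.log_div hy.ne' hx.ne'] at h3
  calc (y - x) * c = c * (y - x) := by ring
    _ ≤ _ := h3

lemma m_logit (x : ℝ) (h0 : 0 < x) (h1 : x < 1) :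
    1 / (1 + Real.exp (-(Real.log (x / (1 - x))))) = x := by
  have h1x : (0:ℝ) < 1 - x := by linarith
  rw [Real.exp_neg, Real.exp_log (by positivity : (0:ℝ) < x / (1 - x))]
  field_simp
  ring

lemma exp_div_eq (θ : ℝ) :
    Real.exp θ / (1 + Real.exp θ) = 1 / (1 + Real.exp (-θ)) := by
  rw [Real.exp_neg]
  have h1 : (0:ℝ) < 1 + Real.exp θ := by positivity
  have h2 : (0:ℝ) < Real.exp θ := Real.exp_pos θ
  field_simp
  ring

lemma kl_formula (θ μ : ℝ) (h0 : 0 < μ) (h1 : μ < 1) :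
    klBernoulli (1 / (1 + Real.exp (-θ))) μ =
      -Real.log (1 - μ) - Real.log (1 + Real.exp θ)
        + (θ - Real.log (μ / (1 - μ))) * (1 / (1 + Real.exp (-θ))) := by
  have hep : (0:ℝ) < Real.exp θ := Real.exp_pos θ
  have hden : (0:ℝ) < 1 + Real.exp θ := by positivity
  have h1μ : (0:ℝ) < 1 - μ := by linarith
  have hm : 1 / (1 + Real.exp (-θ)) = Real.exp θ / (1 + Real.exp θ) :=
    (exp_div_eq θ).symm
  rw [hm]
  unfold klBernoulli
  have h1m : 1 - Real.exp θ / (1 + Real.exp θ) = 1 / (1 + Real.exp θ) := by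
    field_simp
    ring
  rw [h1m, Real.log_div (by positivity) h0.ne', Real.log_div (by positivity) h1μ.ne',
    Real.log_div hep.ne' hden.ne', Real.log_exp, one_div, Real.log_inv,
    Real.log_div h0.ne' h1μ.ne']
  have hsum : Real.exp θ / (1 + Real.exp θ) + (1 + Real.exp θ)⁻¹ = 1 := by
    field_simp
    ring
  linear_combination (-(Real.log (1 + Real.exp θ) + Real.log (1 - μ))) * hsum

theorem stmt_15 (μ₁ μ₂ : ℝ) (h₂ : 0 < μ₂) (h₁₂ : μ₂ < μ₁) (h₁ : μ₁ < 1)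
    (mstar : ℝ) (hm : mstar ∈ Set.Ioo μ₂ μ₁)
    (heq : klBernoulli mstar μ₁ = klBernoulli mstar μ₂) :
    let θ₁ : ℝ := Real.log (μ₁ / (1 - μ₁))
    let θ₂ : ℝ := Real.log (μ₂ / (1 - μ₂))
    let θstar : ℝ := Real.log (mstar / (1 - mstar))
    let αstar : ℝ := (θstar - θ₂) / (θ₁ - θ₂)
    let g : ℝ → ℝ := fun α =>
      α * klBernoulli (1 / (1 + Real.exp (-(α * θ₁ + (1 - α) * θ₂)))) μ₁ +
        (1 - α) * klBernoulli (1 / (1 + Real.exp (-(α * θ₁ + (1 - α) * θ₂)))) μ₂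
    αstar ∈ Set.Ioo (0 : ℝ) 1 ∧ g αstar = klBernoulli mstar μ₁ ∧
      ∀ α ∈ Set.Icc (0 : ℝ) 1, g α ≤ g αstar := by
  intro θ₁ θ₂ θstar αstar g
  obtain ⟨hm2, hm1⟩ := hm
  have hμ1 : 0 < μ₁ := by linarith
  have hμ2 : μ₂ < 1 := by linarith
  have hms0 : 0 < mstar := by linarith
  have hms1 : mstar < 1 := by linarith
  have hlogit : ∀ x y : ℝ, 0 < x → x < y → y < 1 →
      Real.log (x / (1 - x)) < Real.log (y / (1 - y)) := by
    intro x y hx hxy hy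
    have h1x : (0:ℝ) < 1 - x := by linarith
    have h1y : (0:ℝ) < 1 - y := by linarith
    apply Real.log_lt_log (by positivity)
    rw [div_lt_div_iff₀ h1x h1y]
    nlinarith
  have h21 : θ₂ < θ₁ := hlogit _ _ h₂ h₁₂ h₁
  have h2s : θ₂ < θstar := hlogit _ _ h₂ hm2 hms1
  have hs1 : θstar < θ₁ := hlogit _ _ hms0 hm1 h₁
  have hne : θ₁ - θ₂ ≠ 0 := sub_ne_zero.mpr h21.ne'
  have hmθ : 1 / (1 + Real.exp (-θstar)) = mstar := m_logit mstar hms0 hms1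
  have hαIoo : αstar ∈ Set.Ioo (0 : ℝ) 1 := by
    constructor
    · exact div_pos (by linarith) (by linarith)
    · rw [div_lt_one (by linarith)]; linarith
  have haa : αstar * (θ₁ - θ₂) = θstar - θ₂ := div_mul_cancel₀ _ hne
  have hθα : αstar * θ₁ + (1 - αstar) * θ₂ = θstar := by linear_combination haa
  have gform : ∀ α : ℝ, g α =
      α * (-Real.log (1 - μ₁)) + (1 - α) * (-Real.log (1 - μ₂))
        - Real.log (1 + Real.exp (α * θ₁ + (1 - α) * θ₂)) := by
    intro α
    show α * klBernoulli (1 / (1 + Real.exp (-(α * θ₁ + (1 - α) * θ₂)))) μ₁ +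
        (1 - α) * klBernoulli (1 / (1 + Real.exp (-(α * θ₁ + (1 - α) * θ₂)))) μ₂ = _
    rw [kl_formula _ _ hμ1 h₁, kl_formula _ _ h₂ hμ2]
    show α * (-Real.log (1 - μ₁) - Real.log (1 + Real.exp (α * θ₁ + (1 - α) * θ₂))
        + (α * θ₁ + (1 - α) * θ₂ - θ₁) * (1 / (1 + Real.exp (-(α * θ₁ + (1 - α) * θ₂)))))
      + (1 - α) * (-Real.log (1 - μ₂) - Real.log (1 + Real.exp (α * θ₁ + (1 - α) * θ₂))
        + (α * θ₁ + (1 - α) * θ₂ - θ₂) * (1 / (1 + Real.exp (-(α * θ₁ + (1 - α) * θ₂))))) = _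
    ring
  have e1 : klBernoulli mstar μ₁ =
      -Real.log (1 - μ₁) - Real.log (1 + Real.exp θstar) + (θstar - θ₁) * mstar := by
    rw [← hmθ, kl_formula _ _ hμ1 h₁, hmθ]
  have e2 : klBernoulli mstar μ₂ =
      -Real.log (1 - μ₂) - Real.log (1 + Real.exp θstar) + (θstar - θ₂) * mstar := by
    rw [← hmθ, kl_formula _ _ h₂ hμ2, hmθ]
  have key : -Real.log (1 - μ₁) - -Real.log (1 - μ₂) = (θ₁ - θ₂) * mstar := by
    rw [e1, e2] at heq; linarith
  refine ⟨hαIoo, ?_, ?_⟩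
  · rw [gform αstar, hθα, e1]
    linear_combination (αstar - 1) * key + mstar * haa
  · intro α _
    rw [gform α, gform αstar, hθα]
    have htan := softplus_tangent θstar (α * θ₁ + (1 - α) * θ₂)
    rw [exp_div_eq, hmθ] at htan
    have hθd : α * θ₁ + (1 - α) * θ₂ - θstar = (α - αstar) * (θ₁ - θ₂) := by
      linear_combination haa
    have h1 : (α - αstar) * (-Real.log (1 - μ₁) - -Real.log (1 - μ₂)) =
        (α * θ₁ + (1 - α) * θ₂ - θstar) * mstar := by
      linear_combination (α - αstar) * key - mstar * hθd
    nlinarith [htan, h1]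
end

section
/- Let 0 < μ₂ < μ₁ < 1. Then there exists a unique m* ∈ (μ₂, μ₁) such that d(m*, μ₁) = d(m*, μ₂), and the infimum over z ∈ (0,1) of max( d(z, μ₁), d(z, μ₂) ) equals d(m*, μ₁). -/
lemma kl_expand (x y : ℝ) (hx0 : 0 < x) (hx1 : x < 1) (hy0 : 0 < y) (hy1 : y < 1) :
    klBernoulli x y =
      x * (Real.log x - Real.log y) + (1 - x) * (Real.log (1 - x) - Real.log (1 - y)) := by
  unfold klBernoulli
  rw [Real.log_div hx0.ne' hy0.ne',
    Real.log_div (by linarith : (1 : ℝ) - x ≠ 0) (by linarith : (1 : ℝ) - y ≠ 0)]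

lemma kl_self (x : ℝ) (hx0 : 0 < x) (hx1 : x < 1) : klBernoulli x x = 0 := by
  unfold klBernoulli
  rw [div_self hx0.ne', div_self (by linarith : (1 : ℝ) - x ≠ 0), Real.log_one]
  ring

lemma kl_nonneg (x y : ℝ) (hx0 : 0 < x) (hx1 : x < 1) (hy0 : 0 < y) (hy1 : y < 1) :
    0 ≤ klBernoulli x y := by
  have hx1' : (0 : ℝ) < 1 - x := by linarith
  have hy1' : (0 : ℝ) < 1 - y := by linarith
  have h1 : Real.log (y / x) ≤ y / x - 1 := Real.log_le_sub_one_of_pos (div_pos hy0 hx0)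
  have h2 : Real.log ((1 - y) / (1 - x)) ≤ (1 - y) / (1 - x) - 1 :=
    Real.log_le_sub_one_of_pos (div_pos hy1' hx1')
  have e1 : x * (y / x - 1) = y - x := by field_simp
  have e2 : (1 - x) * ((1 - y) / (1 - x) - 1) = x - y := by field_simp; ring
  have l1 : x * Real.log (y / x) ≤ y - x := by
    rw [← e1]; exact mul_le_mul_of_nonneg_left h1 hx0.le
  have l2 : (1 - x) * Real.log ((1 - y) / (1 - x)) ≤ x - y := by
    rw [← e2]; exact mul_le_mul_of_nonneg_left h2 hx1'.le
  have expand : klBernoulli x y =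
      -(x * Real.log (y / x) + (1 - x) * Real.log ((1 - y) / (1 - x))) := by
    rw [kl_expand x y hx0 hx1 hy0 hy1, Real.log_div hy0.ne' hx0.ne',
      Real.log_div hy1'.ne' hx1'.ne']
    ring
  rw [expand]; linarith

lemma kl_pos (x y : ℝ) (hx0 : 0 < x) (hx1 : x < 1) (hy0 : 0 < y) (hy1 : y < 1)
    (hne : x ≠ y) : 0 < klBernoulli x y := by
  have hx1' : (0 : ℝ) < 1 - x := by linarith
  have hy1' : (0 : ℝ) < 1 - y := by linarith
  have h1 : Real.log (y / x) < y / x - 1 := by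
    refine Real.log_lt_sub_one_of_pos (div_pos hy0 hx0) ?_
    intro h
    exact hne (by field_simp at h; linarith)
  have h2 : Real.log ((1 - y) / (1 - x)) ≤ (1 - y) / (1 - x) - 1 :=
    Real.log_le_sub_one_of_pos (div_pos hy1' hx1')
  have e1 : x * (y / x - 1) = y - x := by field_simp
  have e2 : (1 - x) * ((1 - y) / (1 - x) - 1) = x - y := by field_simp; ring
  have l1 : x * Real.log (y / x) < y - x := by
    rw [← e1]; exact mul_lt_mul_of_pos_left h1 hx0
  have l2 : (1 - x) * Real.log ((1 - y) / (1 - x)) ≤ x - y := by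
    rw [← e2]; exact mul_le_mul_of_nonneg_left h2 hx1'.le
  have expand : klBernoulli x y =
      -(x * Real.log (y / x) + (1 - x) * Real.log ((1 - y) / (1 - x))) := by
    rw [kl_expand x y hx0 hx1 hy0 hy1, Real.log_div hy0.ne' hx0.ne',
      Real.log_div hy1'.ne' hx1'.ne']
    ring
  rw [expand]; linarith

theorem stmt_16 (μ₁ μ₂ : ℝ) (h₂ : 0 < μ₂) (h₁₂ : μ₂ < μ₁) (h₁ : μ₁ < 1) :
    ∃ mstar : ℝ, (mstar ∈ Set.Ioo μ₂ μ₁ ∧ klBernoulli mstar μ₁ = klBernoulli mstar μ₂) ∧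
      (∀ m : ℝ, m ∈ Set.Ioo μ₂ μ₁ → klBernoulli m μ₁ = klBernoulli m μ₂ → m = mstar) ∧
      sInf {v : ℝ | ∃ z ∈ Set.Ioo (0 : ℝ) 1,
          v = max (klBernoulli z μ₁) (klBernoulli z μ₂)} = klBernoulli mstar μ₁ := by
  have h0₁ : 0 < μ₁ := lt_trans h₂ h₁₂
  have h₂1 : μ₂ < 1 := lt_trans h₁₂ h₁
  set a : ℝ := Real.log μ₂ - Real.log μ₁ with ha_def
  set b : ℝ := Real.log (1 - μ₂) - Real.log (1 - μ₁) with hb_def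
  have ha : a < 0 := by
    have := Real.log_lt_log h₂ h₁₂; rw [ha_def]; linarith
  have hb : 0 < b := by
    have := Real.log_lt_log (by linarith : (0 : ℝ) < 1 - μ₁) (by linarith : 1 - μ₁ < 1 - μ₂)
    rw [hb_def]; linarith
  have hba : 0 < b - a := by linarith
  set m : ℝ := b / (b - a) with hm_def
  have hm0 : 0 < m := div_pos hb hba
  have hm1 : m < 1 := by rw [hm_def, div_lt_one hba]; linarith
  have hfm : m * a + (1 - m) * b = 0 := by
    rw [hm_def]; field_simp; ring
  have key : ∀ x : ℝ, 0 < x → x < 1 →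
      klBernoulli x μ₁ = klBernoulli x μ₂ + (x * a + (1 - x) * b) := by
    intro x hx0 hx1
    rw [kl_expand x μ₁ hx0 hx1 h0₁ h₁, kl_expand x μ₂ hx0 hx1 h₂ h₂1, ha_def, hb_def]
    ring
  have hfμ₂ : 0 < μ₂ * a + (1 - μ₂) * b := by
    have hk := key μ₂ h₂ h₂1
    have h0 := kl_self μ₂ h₂ h₂1
    have hp := kl_pos μ₂ μ₁ h₂ h₂1 h0₁ h₁ (ne_of_lt h₁₂)
    linarith
  have hfμ₁ : μ₁ * a + (1 - μ₁) * b < 0 := by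
    have hk := key μ₁ h0₁ h₁
    have h0 := kl_self μ₁ h0₁ h₁
    have hp := kl_pos μ₁ μ₂ h0₁ h₁ h₂ h₂1 (ne_of_gt h₁₂)
    linarith
  have hmμ₂ : μ₂ < m := by
    by_contra h
    push_neg at h
    nlinarith [mul_nonneg (sub_nonneg.mpr h) hba.le]
  have hmμ₁ : m < μ₁ := by
    by_contra h
    push_neg at h
    nlinarith [mul_nonneg (sub_nonneg.mpr h) hba.le]
  have hEq : klBernoulli m μ₁ = klBernoulli m μ₂ := by
    rw [key m hm0 hm1, hfm]; ring
  refine ⟨m, ⟨⟨hmμ₂, hmμ₁⟩, hEq⟩, ?_, ?_⟩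
  · -- uniqueness
    intro m' hm' heq
    have hm'0 : 0 < m' := lt_trans h₂ hm'.1
    have hm'1 : m' < 1 := lt_trans hm'.2 h₁
    have h1 : m' * a + (1 - m') * b = 0 := by
      have := key m' hm'0 hm'1; linarith
    have h2 : (m' - m) * (a - b) = 0 := by nlinarith [h1, hfm]
    rcases mul_eq_zero.mp h2 with h | h
    · linarith [sub_eq_zero.mp h]
    · exfalso; linarith [sub_eq_zero.mp h]
  · -- infimum
    have h1m : (0 : ℝ) < 1 - m := by linarith
    set a₁ : ℝ := Real.log m - Real.log μ₁ with ha₁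
    set b₁ : ℝ := Real.log (1 - m) - Real.log (1 - μ₁) with hb₁
    set a₂ : ℝ := Real.log m - Real.log μ₂ with ha₂
    set b₂ : ℝ := Real.log (1 - m) - Real.log (1 - μ₂) with hb₂
    have ha₁neg : a₁ < 0 := by
      have := Real.log_lt_log hm0 hmμ₁; rw [ha₁]; linarith
    have hb₁pos : 0 < b₁ := by
      have := Real.log_lt_log (by linarith : (0 : ℝ) < 1 - μ₁) (by linarith : 1 - μ₁ < 1 - m)
      rw [hb₁]; linarith
    have ha₂pos : 0 < a₂ := by
      have := Real.log_lt_log h₂ hmμ₂; rw [ha₂]; linarith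
    have hb₂neg : b₂ < 0 := by
      have := Real.log_lt_log (by linarith : (0 : ℝ) < 1 - m) (by linarith : 1 - m < 1 - μ₂)
      rw [hb₂]; linarith
    have key₁ : ∀ x : ℝ, 0 < x → x < 1 →
        klBernoulli x μ₁ = klBernoulli x m + (x * a₁ + (1 - x) * b₁) := by
      intro x hx0 hx1
      rw [kl_expand x μ₁ hx0 hx1 h0₁ h₁, kl_expand x m hx0 hx1 hm0 hm1, ha₁, hb₁]
      ring
    have key₂ : ∀ x : ℝ, 0 < x → x < 1 →
        klBernoulli x μ₂ = klBernoulli x m + (x * a₂ + (1 - x) * b₂) := by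
      intro x hx0 hx1
      rw [kl_expand x μ₂ hx0 hx1 h₂ h₂1, kl_expand x m hx0 hx1 hm0 hm1, ha₂, hb₂]
      ring
    have hval₁ : klBernoulli m μ₁ = m * a₁ + (1 - m) * b₁ := by
      have := key₁ m hm0 hm1
      have := kl_self m hm0 hm1
      linarith
    have hval₂ : klBernoulli m μ₂ = m * a₂ + (1 - m) * b₂ := by
      have := key₂ m hm0 hm1
      have := kl_self m hm0 hm1
      linarith
    refine IsLeast.csInf_eq ⟨⟨m, ⟨hm0, hm1⟩, by rw [hEq, max_self]⟩, ?_⟩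
    rintro v ⟨z, ⟨hz0, hz1⟩, rfl⟩
    rcases le_total z m with hzm | hzm
    · -- klBernoulli z μ₁ ≥ klBernoulli m μ₁
      have hk := key₁ z hz0 hz1
      have hnn := kl_nonneg z m hz0 hz1 hm0 hm1
      have hlin : m * a₁ + (1 - m) * b₁ ≤ z * a₁ + (1 - z) * b₁ := by
        have hp := mul_nonneg (sub_nonneg.mpr hzm) (by linarith : (0:ℝ) ≤ b₁ - a₁)
        have hid : (m - z) * (b₁ - a₁) =
            (z * a₁ + (1 - z) * b₁) - (m * a₁ + (1 - m) * b₁) := by ring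
        linarith
      have : klBernoulli m μ₁ ≤ klBernoulli z μ₁ := by
        rw [hval₁, hk]; linarith
      exact le_trans this (le_max_left _ _)
    · -- klBernoulli z μ₂ ≥ klBernoulli m μ₂ = klBernoulli m μ₁
      have hk := key₂ z hz0 hz1
      have hnn := kl_nonneg z m hz0 hz1 hm0 hm1
      have hlin : m * a₂ + (1 - m) * b₂ ≤ z * a₂ + (1 - z) * b₂ := by
        have hp := mul_nonneg (sub_nonneg.mpr hzm) (by linarith : (0:ℝ) ≤ a₂ - b₂)
        have hid : (z - m) * (a₂ - b₂) =
            (z * a₂ + (1 - z) * b₂) - (m * a₂ + (1 - m) * b₂) := by ring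
        linarith
      have : klBernoulli m μ₁ ≤ klBernoulli z μ₂ := by
        rw [hEq, hval₂, hk]; linarith
      exact le_trans this (le_max_right _ _)
end

section
/- Let σ₁, σ₂ > 0 and set α = σ₁/(σ₁+σ₂). For every integer t with t > σ₁/σ₂ + 1, one has σ₁²/⌈αt⌉ + σ₂²/(t − ⌈αt⌉) ≤ ( (σ₁+σ₂)²/t ) · ( (t − σ₁/σ₂) / (t − σ₁/σ₂ − 1) ). -/
theorem stmt_19 (σ₁ σ₂ : ℝ) (hσ₁ : 0 < σ₁) (hσ₂ : 0 < σ₂) (t : ℕ)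
    (ht : σ₁ / σ₂ + 1 < (t : ℝ)) :
    σ₁ ^ 2 / (⌈σ₁ / (σ₁ + σ₂) * (t : ℝ)⌉ : ℝ) +
      σ₂ ^ 2 / ((t : ℝ) - (⌈σ₁ / (σ₁ + σ₂) * (t : ℝ)⌉ : ℝ)) ≤
      (σ₁ + σ₂) ^ 2 / (t : ℝ) * (((t : ℝ) - σ₁ / σ₂) / ((t : ℝ) - σ₁ / σ₂ - 1)) := by
  set s := σ₁ + σ₂ with hs_def
  have hs : 0 < s := by positivity
  have hr : 0 < σ₁ / σ₂ := by positivity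
  have ht0 : (0:ℝ) < t := by linarith
  have htr : 0 < (t:ℝ) - σ₁/σ₂ - 1 := by linarith
  set c : ℤ := ⌈σ₁ / s * (t:ℝ)⌉ with hc_def
  have hlb : σ₁ / s * t ≤ (c:ℝ) := Int.le_ceil _
  have hub : (c:ℝ) < σ₁ / s * t + 1 := Int.ceil_lt_add_one _
  have h0 : 0 < σ₁ / s * t := by positivity
  have hcpos : 0 < (c:ℝ) := lt_of_lt_of_le h0 hlb
  have hid : (t:ℝ) - (σ₁/s * t + 1) = σ₂ * ((t:ℝ) - σ₁/σ₂ - 1) / s := by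
    rw [hs_def]; field_simp; ring
  have htc : σ₂ * ((t:ℝ) - σ₁/σ₂ - 1) / s < (t:ℝ) - c := by
    rw [← hid]; linarith
  have htcpos : 0 < (t:ℝ) - (c:ℝ) := lt_trans (by positivity) htc
  have h1 : σ₁^2 / (c:ℝ) ≤ σ₁ * s / t := by
    rw [show σ₁ * s / (t:ℝ) = σ₁^2 / (σ₁ / s * t) by field_simp]
    gcongr
  have h2 : σ₂^2 / ((t:ℝ) - c) ≤ σ₂ * s / ((t:ℝ) - σ₁/σ₂ - 1) := by
    rw [show σ₂ * s / ((t:ℝ) - σ₁/σ₂ - 1) = σ₂^2 / (σ₂ * ((t:ℝ) - σ₁/σ₂ - 1) / s) by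
      field_simp]
    gcongr
  have h3 : σ₁ * s / t + σ₂ * s / ((t:ℝ) - σ₁/σ₂ - 1)
      = s^2 / (t:ℝ) * (((t:ℝ) - σ₁/σ₂)/((t:ℝ)-σ₁/σ₂-1)) := by
    rw [div_add_div _ _ (ne_of_gt ht0) (ne_of_gt htr), div_mul_div_comm,
      div_eq_div_iff (by positivity) (by positivity), hs_def]
    have hrr : σ₁/σ₂*σ₂ = σ₁ := div_mul_cancel₀ _ (ne_of_gt hσ₂)
    linear_combination ((t:ℝ)*((t:ℝ)-σ₁/σ₂-1))*(σ₁+σ₂) * hrr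
  linarith
end
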